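/- arXiv:1705.08655 — 2 statements merged into one kernel-verified Lean document; each statement's English description precedes it below -/
import Mathlib

section
/- Let λ be a partition of n and k ≥ 0, with k-th row of the 2-quotient tower (λ_0^{(k)},...,λ_{2^k−1}^{(k)}). Then λ is odd if and only if: (i) for all j < k the total size of the partitions in the j-th row of the 2-core tower is at most 1; (ii) each λ_i^{(k)} is an odd partition; and (iii) the sizes |λ_i^{(k)}| are pairwise 2-disjoint. In that case Σ_i |λ_i^{(k)}| = ⌊n/2^k⌋. -/
/-- A partition, given by its weakly decreasing sequence of parts (eventually zero). -/
structure OldPartition where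
  parts : ℕ → ℕ
  antitone : Antitone parts
  finite : ∃ N, parts N = 0

namespace OldPartition

/-- The size `|λ|` of a partition: the sum of its parts. -/
noncomputable def size (l : OldPartition) : ℕ := ∑ᶠ i, l.parts i

/-- The parts of the conjugate partition. -/
noncomputable def conjParts (l : OldPartition) (j : ℕ) : ℕ := Nat.card {i : ℕ | j < l.parts i}

/-- The hook length of the cell `(i,j)` (0-indexed) of a partition. -/
noncomputable def hookLength (l : OldPartition) (i j : ℕ) : ℕ :=
  (l.parts i - j) + (l.conjParts j - i) - 1

/-- The degree of the irreducible character of the symmetric group labelled by `l`,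
via the hook length formula. -/
noncomputable def degree (l : OldPartition) : ℕ :=
  (l.size).factorial / ∏ᶠ (p : ℕ × ℕ) (_ : p.2 < l.parts p.1), l.hookLength p.1 p.2

/-- A partition is odd if the corresponding irreducible character of the symmetric
group has odd degree. -/
noncomputable def IsOdd (l : OldPartition) : Prop := Odd l.degree

/-- A hook partition: all parts beyond the first are at most 1. -/
def IsHook (l : OldPartition) : Prop := ∀ i, 1 ≤ i → l.parts i ≤ 1

/-- The beta-set (set of first-column hook lengths) of `l` computed with `N` beads. -/
def betaSet (l : OldPartition) (N : ℕ) : Finset ℕ :=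
  (Finset.range N).image (fun i => l.parts i + (N - 1 - i))

/-- `RemoveHook l m h` : `m` is obtained from `l` by removing a hook of length `h`,
expressed via beta-sets. -/
def RemoveHook (l m : OldPartition) (h : ℕ) : Prop :=
  ∃ N, l.parts N = 0 ∧ m.parts N = 0 ∧
    ∃ x ∈ l.betaSet N, h ≤ x ∧ x - h ∉ l.betaSet N ∧
      m.betaSet N = insert (x - h) ((l.betaSet N).erase x)

/-- `IsECore e l c` : `c` is the `e`-core of `l`, i.e. it is obtained from `l` by
successively removing `e`-hooks and has no `e`-hook. -/
def IsECore (e : ℕ) (l c : OldPartition) : Prop :=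
  Relation.ReflTransGen (fun a b => RemoveHook a b e) l c ∧ ∀ b, ¬ RemoveHook c b e

/-- `IsQuotient2 l l0 l1` : `(l0, l1)` is the 2-quotient of `l`, via the parity
splitting of a beta-set with an even number of beads. -/
def IsQuotient2 (l l0 l1 : OldPartition) : Prop :=
  ∃ N, Even N ∧ l.parts N = 0 ∧
    l0.parts ((l.betaSet N).filter (fun x => x % 2 = 0)).card = 0 ∧
    l1.parts ((l.betaSet N).filter (fun x => x % 2 = 1)).card = 0 ∧
    l0.betaSet ((l.betaSet N).filter (fun x => x % 2 = 0)).card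
      = ((l.betaSet N).filter (fun x => x % 2 = 0)).image (fun x => x / 2) ∧
    l1.betaSet ((l.betaSet N).filter (fun x => x % 2 = 1)).card
      = ((l.betaSet N).filter (fun x => x % 2 = 1)).image (fun x => x / 2)

/-- `IsQuotRow k l f` : `f 0, …, f (2^k - 1)` is the `k`-th row of the 2-quotient
tower of `l`. -/
def IsQuotRow : ℕ → OldPartition → (ℕ → OldPartition) → Prop
  | 0, l, f => f 0 = l
  | k + 1, l, f => ∃ g : ℕ → OldPartition, IsQuotRow k l g ∧
      ∀ i < 2 ^ k, IsQuotient2 (g i) (f (2 * i)) (f (2 * i + 1))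

/-- `DGood d l` : `|l| ≡ 2^d - 1 (mod 2^(d+1))` and the `2^d`-core of `l` is a hook
partition. -/
def DGood (d : ℕ) (l : OldPartition) : Prop :=
  l.size % 2 ^ (d + 1) = 2 ^ d - 1 ∧
  ∃ c : OldPartition, IsECore (2 ^ d) l c ∧ c.IsHook

end OldPartition

namespace MacAux
open Finset

/-- size of the partition with beta-set `B` -/
def bn (B : Finset ℕ) : ℕ := (∑ x ∈ B, x) - (B.card.choose 2)

lemma sum_ge_choose (B : Finset ℕ) : B.card.choose 2 ≤ ∑ x ∈ B, x := by
  induction B using Finset.induction_on_max with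
  | empty => simp
  | insert a s ha ih =>
    have has : a ∉ s := fun h => absurd (ha a h) (lt_irrefl a)
    have hsub : s ⊆ range a := fun x hx => mem_range.2 (ha x hx)
    have hcard : s.card ≤ a := by
      simpa using Finset.card_le_card hsub
    rw [Finset.sum_insert has, Finset.card_insert_of_notMem has]
    have : (s.card + 1).choose 2 = s.card.choose 2 + s.card := by
      rw [Nat.choose_succ_succ]; simp [Nat.choose_one_right]; omega
    omega

lemma bn_add (B : Finset ℕ) : bn B + B.card.choose 2 = ∑ x ∈ B, x := by
  have := sum_ge_choose B; unfold bn; omega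

lemma sum_rank (B : Finset ℕ) :
    ∑ x ∈ B, (B.filter (· < x)).card = B.card.choose 2 := by
  induction B using Finset.induction_on_max with
  | empty => simp
  | insert a s ha ih =>
    have has : a ∉ s := fun h => absurd (ha a h) (lt_irrefl a)
    rw [Finset.sum_insert has, Finset.card_insert_of_notMem has]
    have h1 : (insert a s).filter (· < a) = s := by
      ext x; simp only [mem_filter, mem_insert]
      constructor
      · rintro ⟨h | h, hlt⟩; · omega
        exact h
      · intro hx; exact ⟨Or.inr hx, ha x hx⟩
    have h2 : ∀ x ∈ s, (insert a s).filter (· < x) = s.filter (· < x) := by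
      intro x hx; ext y; simp only [mem_filter, mem_insert]
      have := ha x hx
      constructor
      · rintro ⟨h | h, hlt⟩; · omega
        exact ⟨h, hlt⟩
      · rintro ⟨h, hlt⟩; exact ⟨Or.inr h, hlt⟩
    rw [h1, Finset.sum_congr rfl (fun x hx => by rw [h2 x hx]), ih]
    have : (s.card + 1).choose 2 = s.card.choose 2 + s.card := by
      rw [Nat.choose_succ_succ]; simp [Nat.choose_one_right]; omega
    omega

/-- total number of hooks equals the size -/
lemma cnt_all (B : Finset ℕ) :
    ∑ x ∈ B, ((range x).filter (· ∉ B)).card = bn B := by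
  have key : ∀ x ∈ B, ((range x).filter (· ∉ B)).card + (B.filter (· < x)).card = x := by
    intro x _
    have h1 : (range x).filter (· ∈ B) = B.filter (· < x) := by
      ext y; simp [mem_filter, mem_range, and_comm]
    have := Finset.card_filter_add_card_filter_not (s := range x)
      (p := (· ∉ B))
    simp only [card_range] at this
    have h2 : (range x).filter (fun y => ¬ y ∉ B) = B.filter (· < x) := by
      ext y; simp [mem_filter, mem_range, and_comm]
    rw [h2] at this
    omega
  have : ∑ x ∈ B, (((range x).filter (· ∉ B)).card + (B.filter (· < x)).card)
      = ∑ x ∈ B, x := Finset.sum_congr rfl key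
  rw [Finset.sum_add_distrib, sum_rank] at this
  have := bn_add B
  omega

lemma downclosed_eq_range (X : Finset ℕ) (h : ∀ c ∈ X, c ≠ 0 → c - 1 ∈ X) :
    X = range X.card := by
  have hdc : ∀ c ∈ X, ∀ d, d ≤ c → d ∈ X := by
    intro c hc d hd
    obtain ⟨m, hm⟩ := Nat.exists_eq_add_of_le hd
    clear hd
    induction m generalizing d with
    | zero =>
      have : d = c := by omega
      subst this; exact hc
    | succ m ih =>
      have h1 : d + 1 ∈ X := ih (d+1) (by omega)
      have := h _ h1 (by omega)
      simpa using this
  rcases X.eq_empty_or_nonempty with rfl | hne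
  · simp
  · have hmax := X.max'_mem hne
    have hsub : X ⊆ range (X.max' hne + 1) := fun x hx =>
      mem_range.2 (by have := X.le_max' x hx; omega)
    have hsup : range (X.max' hne + 1) ⊆ X := fun d hd =>
      hdc _ hmax d (by simpa [Nat.lt_succ_iff] using hd)
    have : X = range (X.max' hne + 1) := Finset.Subset.antisymm hsub hsup
    rw [this, card_range]

lemma bn_range (k : ℕ) : bn (range k) = 0 := by
  unfold bn
  have h1 := Finset.sum_range_id_mul_two k
  have h2 : k.choose 2 = k * (k-1) / 2 := Nat.choose_two_right k
  rw [card_range, h2]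
  omega

lemma exists_unpacked (X : Finset ℕ) (h : bn X ≠ 0) :
    ∃ c ∈ X, c ≠ 0 ∧ c - 1 ∉ X := by
  by_contra hc
  push_neg at hc
  have := downclosed_eq_range X (fun c hcX hc0 => hc c hcX hc0)
  rw [this, bn_range] at h
  exact h rfl

lemma bn_insert_zero_shift (X : Finset ℕ) :
    bn (insert 0 (X.image (· + 1))) = bn X := by
  have hinj : Function.Injective (· + 1 : ℕ → ℕ) := fun a b h => by simpa using h
  have h0 : (0:ℕ) ∉ X.image (· + 1) := by simp
  have hsum : ∑ x ∈ insert 0 (X.image (· + 1)), x = ∑ x ∈ X, x + X.card := by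
    rw [Finset.sum_insert h0, Finset.sum_image (fun a _ b _ h => Nat.add_right_cancel h)]
    simp [Finset.sum_add_distrib]
  have hcard : (insert 0 (X.image (· + 1))).card = X.card + 1 := by
    rw [Finset.card_insert_of_notMem h0, Finset.card_image_of_injective _ hinj]
  have hch : (X.card + 1).choose 2 = X.card.choose 2 + X.card := by
    rw [Nat.choose_succ_succ]; simp [Nat.choose_one_right]; omega
  have := sum_ge_choose X
  unfold bn
  rw [hsum, hcard, hch]
  omega


def cls (q r : ℕ) (B : Finset ℕ) : Finset ℕ :=
  (B.filter (fun x => x % q = r)).image (fun x => x / q)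

/-- number of hooks of `B` whose length is divisible by `q` -/
def cnt (q : ℕ) (B : Finset ℕ) : ℕ :=
  ∑ x ∈ B, ((range x).filter (fun y => y ∉ B ∧ (x - y) % q = 0)).card

lemma sum_range_id (n : ℕ) : ∑ i ∈ range n, i = n.choose 2 := by
  have h1 := Finset.sum_range_id_mul_two n
  have h2 : n.choose 2 = n * (n-1) / 2 := Nat.choose_two_right n
  omega

lemma mem_cls {q r : ℕ} (hr : r < q) {B : Finset ℕ} {c : ℕ} :
    c ∈ cls q r B ↔ q * c + r ∈ B := by
  have hq : 0 < q := by omega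
  constructor
  · rintro hc
    obtain ⟨x, hx, rfl⟩ := Finset.mem_image.1 hc
    obtain ⟨hxB, hmod⟩ := Finset.mem_filter.1 hx
    have : q * (x / q) + x % q = x := Nat.div_add_mod x q
    rw [hmod] at this
    rwa [this]
  · intro h
    exact Finset.mem_image.2 ⟨q * c + r, Finset.mem_filter.2 ⟨h, by
      rw [Nat.mul_add_mod]; exact Nat.mod_eq_of_lt hr⟩, by
      rw [Nat.mul_add_div hq]; simp [Nat.div_eq_of_lt hr]⟩

lemma cls_injOn {q r : ℕ} (B : Finset ℕ) :
    ∀ x ∈ B.filter (fun x => x % q = r), ∀ y ∈ B.filter (fun x => x % q = r),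
      x / q = y / q → x = y := by
  intro x hx y hy h
  obtain ⟨-, hx2⟩ := Finset.mem_filter.1 hx
  obtain ⟨-, hy2⟩ := Finset.mem_filter.1 hy
  have ex : q * (x / q) + x % q = x := Nat.div_add_mod x q
  have ey : q * (y / q) + y % q = y := Nat.div_add_mod y q
  rw [← ex, ← ey, h, hx2, hy2]

lemma card_cls {q r : ℕ} (B : Finset ℕ) :
    (cls q r B).card = (B.filter (fun x => x % q = r)).card :=
  Finset.card_image_of_injOn (cls_injOn B)

lemma sum_over_cls {q r : ℕ} (B : Finset ℕ) {M : Type*} [AddCommMonoid M] (g : ℕ → M) :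
    ∑ c ∈ cls q r B, g c = ∑ x ∈ B.filter (fun x => x % q = r), g (x / q) := by
  unfold cls
  exact Finset.sum_image (cls_injOn B)

lemma cnt_eq {q : ℕ} (hq : 0 < q) (B : Finset ℕ) :
    cnt q B = ∑ r ∈ range q, bn (cls q r B) := by
  unfold cnt
  rw [← Finset.sum_fiberwise_of_maps_to (g := fun x => x % q)
    (t := range q) (fun x _ => Finset.mem_range.2 (Nat.mod_lt x hq))]
  refine Finset.sum_congr rfl (fun r hr => ?_)
  have hrq : r < q := Finset.mem_range.1 hr
  rw [← cnt_all (cls q r B), sum_over_cls]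
  refine Finset.sum_congr rfl (fun x hx => ?_)
  obtain ⟨hxB, hxr⟩ := Finset.mem_filter.1 hx
  -- bijection y ↦ y / q
  refine Finset.card_bij' (fun y _ => y / q) (fun c _ => q * c + r) ?_ ?_ ?_ ?_
  · intro y hy
    have h' := Finset.mem_filter.1 hy
    have hyr : y < x := Finset.mem_range.1 h'.1
    have hyB : y ∉ B := h'.2.1
    have hymod : (x - y) % q = 0 := h'.2.2
    have hdvd : q ∣ x - y := Nat.dvd_iff_mod_eq_zero.2 hymod
    have hmodeq : y % q = x % q := (Nat.modEq_iff_dvd' (le_of_lt hyr)).2 hdvd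
    have hyq : y % q = r := by rw [hmodeq, hxr]
    refine Finset.mem_filter.2 ⟨Finset.mem_range.2 ?_, ?_⟩
    · -- y / q < x / q
      have ex : q * (x / q) + r = x := by rw [← hxr]; exact Nat.div_add_mod x q
      have ey : q * (y / q) + r = y := by rw [← hyq]; exact Nat.div_add_mod y q
      by_contra hc
      push_neg at hc
      have hmul : q * (x/q) ≤ q * (y/q) := Nat.mul_le_mul_left q hc
      omega
    · show y / q ∉ cls q r B
      intro hc
      rw [mem_cls hrq] at hc
      have ey : q * (y / q) + r = y := by rw [← hyq]; exact Nat.div_add_mod y q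
      rw [ey] at hc
      exact hyB hc
  · intro c hc
    have h' := Finset.mem_filter.1 hc
    have hcr : c < x / q := Finset.mem_range.1 h'.1
    have hccls : c ∉ cls q r B := h'.2
    have hclt : q * c + r < x := by
      have ex : q * (x / q) + r = x := by rw [← hxr]; exact Nat.div_add_mod x q
      have : q * c < q * (x/q) := (Nat.mul_lt_mul_left hq).2 hcr
      omega
    refine Finset.mem_filter.2 ⟨Finset.mem_range.2 hclt, ?_, ?_⟩
    · intro hB
      exact hccls ((mem_cls hrq).2 hB)
    · have hle : q * c + r ≤ x := le_of_lt hclt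
      have hmm : (q*c+r) % q = x % q := by rw [Nat.mul_add_mod, Nat.mod_eq_of_lt hrq, hxr]
      have hdvd : q ∣ x - (q*c+r) := (Nat.modEq_iff_dvd' hle).1 hmm
      exact Nat.dvd_iff_mod_eq_zero.1 hdvd
  · intro y hy
    have h' := Finset.mem_filter.1 hy
    have hyr : y < x := Finset.mem_range.1 h'.1
    have hymod : (x - y) % q = 0 := h'.2.2
    have hdvd : q ∣ x - y := Nat.dvd_iff_mod_eq_zero.2 hymod
    have hmodeq : y % q = x % q := (Nat.modEq_iff_dvd' (le_of_lt hyr)).2 hdvd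
    have hyq : y % q = r := by rw [hmodeq, hxr]
    show q * (y / q) + r = y
    rw [← hyq]; exact Nat.div_add_mod y q
  · intro c hc
    show (q * c + r) / q = c
    rw [Nat.mul_add_div hq]; simp [Nat.div_eq_of_lt hrq]

lemma mul_cnt_le {q : ℕ} (hq : 0 < q) (B : Finset ℕ) :
    q * cnt q B ≤ bn B := by
  classical
  set a := ∑ r ∈ range q, bn (cls q r B) with ha
  set b := ∑ r ∈ range q, ((cls q r B).card.choose 2) with hb
  set c := ∑ r ∈ range q, r * (cls q r B).card with hcdef
  set S := ∑ r ∈ range q, (∑ x ∈ cls q r B, x) with hS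
  have hab : a + b = S := by
    rw [ha, hb, hS, ← Finset.sum_add_distrib]
    exact Finset.sum_congr rfl (fun r _ => bn_add _)
  -- class sums
  have hclass : ∀ r, ∑ x ∈ B.filter (fun x => x % q = r), x
      = q * (∑ x ∈ cls q r B, x) + r * (cls q r B).card := by
    intro r
    rw [sum_over_cls, card_cls, Finset.mul_sum]
    have hpt : ∀ x ∈ B.filter (fun x => x % q = r), x = q * (x / q) + r := by
      intro x hx
      have hx2 := (Finset.mem_filter.1 hx).2
      have := Nat.div_add_mod x q
      omega
    rw [Finset.sum_congr rfl hpt, Finset.sum_add_distrib, Finset.sum_const, smul_eq_mul]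
    ring
  have hsumB : ∑ x ∈ B, x = q * S + c := by
    rw [← Finset.sum_fiberwise_of_maps_to (g := fun x => x % q)
      (t := range q) (fun x _ => Finset.mem_range.2 (Nat.mod_lt x hq)),
      Finset.sum_congr rfl (fun r _ => hclass r), Finset.sum_add_distrib, hS, hcdef,
      Finset.mul_sum]
  -- the packed set
  set P : Finset ℕ := (range q).biUnion
    (fun r => (range ((cls q r B).card)).image (fun cc => q*cc+r)) with hP
  have hdisj : ∀ r ∈ range q, ∀ r' ∈ range q, r ≠ r' →
      Disjoint ((range ((cls q r B).card)).image (fun cc => q*cc+r))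
        ((range ((cls q r' B).card)).image (fun cc => q*cc+r')) := by
    intro r hr r' hr' hne
    rw [Finset.disjoint_left]
    rintro x hx hx'
    obtain ⟨u, -, rfl⟩ := Finset.mem_image.1 hx
    obtain ⟨v, -, hv⟩ := Finset.mem_image.1 hx'
    have h1 : (q*u+r) % q = r := by rw [Nat.mul_add_mod]; exact Nat.mod_eq_of_lt (mem_range.1 hr)
    have h2 : (q*v+r') % q = r' := by rw [Nat.mul_add_mod]; exact Nat.mod_eq_of_lt (mem_range.1 hr')
    rw [hv, h1] at h2
    exact hne h2
  have hinjim : ∀ r, Function.Injective (fun cc => q*cc+r) := by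
    intro r u v h
    simp only [] at h
    have : q * u = q * v := by omega
    exact Nat.eq_of_mul_eq_mul_left hq this
  have hcardP : P.card = B.card := by
    rw [hP, Finset.card_biUnion hdisj]
    have : B.card = ∑ r ∈ range q, (B.filter (fun x => x % q = r)).card :=
      Finset.card_eq_sum_card_fiberwise (fun x _ => Finset.mem_range.2 (Nat.mod_lt x hq))
    rw [this]
    refine Finset.sum_congr rfl (fun r _ => ?_)
    rw [Finset.card_image_of_injective _ (hinjim r), card_range, card_cls]
  have hsumP : ∑ x ∈ P, x = q * b + c := by
    rw [hP, Finset.sum_biUnion]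
    · rw [hb, hcdef, Finset.mul_sum, ← Finset.sum_add_distrib]
      refine Finset.sum_congr rfl (fun r _ => ?_)
      rw [Finset.sum_image (fun u _ v _ h => hinjim r h)]
      have : ∑ cc ∈ range ((cls q r B).card), (q*cc+r)
          = q * ((cls q r B).card.choose 2) + r * (cls q r B).card := by
        rw [Finset.sum_add_distrib, ← Finset.mul_sum, sum_range_id, Finset.sum_const,
          card_range, smul_eq_mul]
        ring
      rw [this]
    · intro s hs t ht hst
      exact hdisj s hs t ht hst
  have hPge : B.card.choose 2 ≤ q * b + c := by
    rw [← hsumP, ← hcardP]; exact sum_ge_choose P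
  -- conclude
  have hqa : q * cnt q B + (q * b + c) ≤ bn B + (q * b + c) := by
    have e1 : q * cnt q B + (q * b + c) = ∑ x ∈ B, x := by
      rw [cnt_eq hq, ← ha, ← Nat.add_assoc, ← Nat.mul_add, hab, hsumB]
    have e2 : bn B + B.card.choose 2 = ∑ x ∈ B, x := bn_add B
    calc q * cnt q B + (q * b + c) = ∑ x ∈ B, x := e1
    _ = bn B + B.card.choose 2 := e2.symm
    _ ≤ bn B + (q * b + c) := Nat.add_le_add_left hPge _
  exact Nat.le_of_add_le_add_right hqa

lemma sum_range_double {M : Type*} [AddCommMonoid M] (F : ℕ → M) (q : ℕ) :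
    ∑ r ∈ range (2*q), F r = ∑ s ∈ range q, (F (2*s) + F (2*s+1)) := by
  induction q with
  | zero => simp
  | succ q ih =>
    have : 2*(q+1) = (2*q+1)+1 := by ring
    rw [this, Finset.sum_range_succ, Finset.sum_range_succ, ih, Finset.sum_range_succ]
    rw [add_assoc]

lemma cls_cls {q s ε : ℕ} (hs : s < q) (hε : ε < 2) (B : Finset ℕ) :
    cls q s (cls 2 ε B) = cls (2*q) (2*s+ε) B := by
  ext c
  rw [mem_cls hs, mem_cls hε, mem_cls (by omega : 2*s+ε < 2*q)]
  have e : 2*(q*c+s)+ε = 2*q*c+(2*s+ε) := by ring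
  constructor
  · intro h; rw [← e]; exact h
  · intro h; rw [← e] at h; exact h
lemma cnt_double {q : ℕ} (hq : 0 < q) (B : Finset ℕ) :
    cnt (2*q) B = cnt q (cls 2 0 B) + cnt q (cls 2 1 B) := by
  rw [cnt_eq (by omega : (0:ℕ) < 2*q), cnt_eq hq, cnt_eq hq,
    sum_range_double (fun r => bn (cls (2*q) r B)) q, Finset.sum_add_distrib]
  congr 1
  · exact Finset.sum_congr rfl (fun s hs => by
      rw [cls_cls (mem_range.1 hs) (by omega) B]
      norm_num)
  · exact Finset.sum_congr rfl (fun s hs => by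
      rw [cls_cls (mem_range.1 hs) (by omega) B])

lemma cnt_large {q : ℕ} {B : Finset ℕ} (h : ∀ x ∈ B, x < q) : cnt q B = 0 := by
  unfold cnt
  refine Finset.sum_eq_zero (fun x hx => ?_)
  rw [Finset.card_eq_zero]
  refine Finset.filter_eq_empty_iff.2 (fun {y} hy => ?_)
  rintro ⟨hyB, hmod⟩
  have hyx : y < x := Finset.mem_range.1 hy
  have h1 : 0 < x - y := by omega
  have h2 : x - y < q := by have := h x hx; omega
  rw [Nat.mod_eq_of_lt h2] at hmod
  omega


/-- product of all hook lengths, computed from the beta-set -/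
def hp (B : Finset ℕ) : ℕ := ∏ x ∈ B, ∏ y ∈ (range x).filter (· ∉ B), (x - y)

lemma hp_pos (B : Finset ℕ) : 0 < hp B := by
  refine Finset.prod_pos (fun x hx => Finset.prod_pos (fun y hy => ?_))
  have := Finset.mem_range.1 (Finset.mem_filter.1 hy).1
  omega

lemma fact_hp {p : ℕ} (pp : p.Prime) {B : Finset ℕ} {b : ℕ} (hb : ∀ x ∈ B, x ≤ b) :
    (hp B).factorization p = ∑ i ∈ Icc 1 b, cnt (p^i) B := by
  unfold hp
  rw [Nat.factorization_prod (fun x hx =>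
    (Finset.prod_pos (fun y hy => by
      have := Finset.mem_range.1 (Finset.mem_filter.1 hy).1; omega)).ne')]
  rw [Finset.sum_apply']
  have hterm : ∀ x ∈ B, (∏ y ∈ (range x).filter (· ∉ B), (x - y)).factorization p
      = ∑ y ∈ (range x).filter (· ∉ B), (x - y).factorization p := by
    intro x hx
    rw [Nat.factorization_prod (fun y hy => by
      have := Finset.mem_range.1 (Finset.mem_filter.1 hy).1; omega)]
    rw [Finset.sum_apply']
  rw [Finset.sum_congr rfl hterm]
  have hval : ∀ x ∈ B, ∀ y ∈ (range x).filter (· ∉ B),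
      (x - y).factorization p = ∑ i ∈ Icc 1 b, (if (x - y) % p^i = 0 then 1 else 0) := by
    intro x hx y hy
    have hyx : y < x := Finset.mem_range.1 (Finset.mem_filter.1 hy).1
    set m := x - y with hm
    have hm0 : m ≠ 0 := by omega
    have hmb : m ≤ p ^ b := by
      have h1 : m ≤ b := le_trans (by omega) (hb x hx)
      have h2 : m < 2 ^ b := lt_of_le_of_lt h1 (Nat.lt_two_pow_self (n := b))
      have h3 : 2 ^ b ≤ p ^ b := Nat.pow_le_pow_left pp.two_le b
      omega
    rw [Nat.factorization_eq_card_pow_dvd m pp, Nat.Ico_filter_pow_dvd_eq pp hm0 hmb]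
    rw [Finset.card_filter]
    refine Finset.sum_congr rfl (fun i _ => ?_)
    congr 1
    simp [Nat.dvd_iff_mod_eq_zero]
  rw [Finset.sum_congr rfl (fun x hx => Finset.sum_congr rfl (hval x hx))]
  rw [Finset.sum_congr rfl (fun x _ => Finset.sum_comm), Finset.sum_comm]
  refine Finset.sum_congr rfl (fun i _ => ?_)
  unfold cnt
  refine Finset.sum_congr rfl (fun x hx => ?_)
  rw [Finset.card_filter, Finset.sum_filter]
  refine Finset.sum_congr rfl (fun y _ => ?_)
  by_cases h1 : y ∉ B
  · by_cases h2 : (x - y) % p^i = 0 <;> simp [h1, h2]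
  · simp [h1]

lemma legendre {p : ℕ} (pp : p.Prime) {n b : ℕ} (hnb : n ≤ b) :
    (Nat.factorial n).factorization p = ∑ i ∈ Icc 1 b, n / p^i := by
  have hlog : Nat.log p n < b + 1 := by
    have := Nat.log_le_self p n
    omega
  have h1 := Nat.Prime.emultiplicity_factorial pp (n := n) (b := b + 1) hlog
  have h2 : multiplicity p (Nat.factorial n) = ∑ i ∈ Ico 1 (b+1), n / p^i :=
    multiplicity_eq_of_emultiplicity_eq_some h1
  have h3 := Nat.multiplicity_eq_factorization pp (Nat.factorial_ne_zero n)
  rw [← Finset.Ico_add_one_right_eq_Icc, ← h3]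
  exact h2

/-- 2-adic valuation of `m!` -/
def nuf (m : ℕ) : ℕ := (Nat.factorial m).factorization 2

lemma legendre' {n b : ℕ} (hnb : n ≤ b) :
    nuf n = ∑ j ∈ range b, n / 2^(1+j) := by
  rw [nuf, legendre Nat.prime_two hnb, ← Finset.Ico_add_one_right_eq_Icc, Finset.sum_Ico_eq_sum_range]
  simp

lemma nu_step (m : ℕ) : nuf m = m / 2 + nuf (m / 2) := by
  have h1 : nuf m = ∑ j ∈ range (m+1), m / 2^(1+j) := legendre' (by omega)
  have h2 : nuf (m/2) = ∑ j ∈ range m, (m/2) / 2^(1+j) := legendre' (by omega)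
  have h3 : ∀ j : ℕ, m / 2^(1+(j+1)) = m / 2 / 2^(1+j) := fun j => by
    rw [Nat.div_div_eq_div_mul]
    congr 1
    have he : 1+(j+1) = (1+j)+1 := by omega
    rw [he, pow_succ]
    ring
  rw [h1, Finset.sum_range_succ' (fun j => m / 2^(1+j)) m,
    Finset.sum_congr rfl (fun j _ => h3 j), ← h2]
  have h4 : (2:ℕ)^(1+0) = 2 := by norm_num
  rw [h4]
  omega

lemma fact_le_of_dvd {a c : ℕ} (p : ℕ) (h : a ∣ c) (hc : c ≠ 0) :
    a.factorization p ≤ c.factorization p := by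
  have ha : a ≠ 0 := by rintro rfl; exact hc (zero_dvd_iff.1 h)
  exact (Nat.factorization_le_iff_dvd ha hc).2 h p

lemma nu_mono {a c : ℕ} (h : a ≤ c) : nuf a ≤ nuf c := by
  unfold nuf
  exact fact_le_of_dvd 2 (Nat.factorial_dvd_factorial h) (Nat.factorial_ne_zero c)

lemma nu_add_le (a c : ℕ) : nuf a + nuf c ≤ nuf (a + c) := by
  unfold nuf
  have h := Nat.factorial_mul_factorial_dvd_factorial_add a c
  have := fact_le_of_dvd 2 h (Nat.factorial_ne_zero (a+c))
  rwa [Nat.factorization_mul (Nat.factorial_ne_zero a) (Nat.factorial_ne_zero c),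
    Finsupp.add_apply] at this

lemma eq_zero_iff_testBit (x : ℕ) : x = 0 ↔ ∀ i, x.testBit i = false :=
  ⟨fun h i => by simp [h], fun h => Nat.eq_of_testBit_eq (fun i => by simp [h i])⟩

lemma land_rec (a b : ℕ) : a &&& b = 0 ↔ (¬(a % 2 = 1 ∧ b % 2 = 1) ∧ (a/2) &&& (b/2) = 0) := by
  rw [eq_zero_iff_testBit, eq_zero_iff_testBit]
  constructor
  · intro h
    refine ⟨?_, fun i => ?_⟩
    · have := h 0
      rw [Nat.testBit_land, Nat.testBit_zero, Nat.testBit_zero] at this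
      simpa using this
    · have := h (i+1)
      rw [Nat.testBit_land, Nat.testBit_add_one, Nat.testBit_add_one] at this
      rw [Nat.testBit_land]
      exact this
  · rintro ⟨h0, h⟩ i
    cases i with
    | zero =>
      rw [Nat.testBit_land, Nat.testBit_zero, Nat.testBit_zero]
      simpa using h0
    | succ i =>
      rw [Nat.testBit_land, Nat.testBit_add_one, Nat.testBit_add_one]
      have := h i
      rwa [Nat.testBit_land] at this

lemma nu_add_eq_iff : ∀ (n a b : ℕ), a + b = n →
    ((nuf (a + b) = nuf a + nuf b) ↔ a &&& b = 0)
  | n, a, b, hn => by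
    rcases Nat.eq_zero_or_pos n with h0 | hpos
    · have ha : a = 0 := by omega
      have hb : b = 0 := by omega
      subst ha; subst hb; simp [nuf]
    · have hrec := nu_add_eq_iff (a/2 + b/2) (a/2) (b/2) rfl
      have hsa := nu_step a
      have hsb := nu_step b
      have hsab := nu_step (a + b)
      rcases eq_or_ne (a % 2 + b % 2) 2 with hodd | heven
      · -- both odd
        have hdiv : (a + b) / 2 = a/2 + b/2 + 1 := by omega
        rw [land_rec]
        have hland : ¬ (a &&& b = 0) := by
          rw [land_rec]
          rintro ⟨h1, -⟩
          exact h1 ⟨by omega, by omega⟩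
        constructor
        · intro heq
          exfalso
          rw [hdiv] at hsab
          have h1 : nuf (a/2) + nuf (b/2) ≤ nuf (a/2 + b/2) := nu_add_le _ _
          have h2 : nuf (a/2 + b/2) ≤ nuf (a/2 + b/2 + 1) := nu_mono (by omega)
          omega
        · intro h
          exact absurd (land_rec a b |>.2 ⟨fun hh => h.1 hh, h.2⟩) hland
      · -- not both odd
        have hdiv : (a + b) / 2 = a/2 + b/2 := by omega
        rw [hdiv] at hsab
        rw [land_rec]
        constructor
        · intro heq
          refine ⟨by omega, ?_⟩
          rw [← hrec]
          omega
        · rintro ⟨h1, h2⟩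
          rw [← hrec] at h2
          omega
  termination_by n a b hn => n
  decreasing_by
    simp_wf
    omega

lemma land_split : ∀ (n a b m : ℕ), a + b + m = n → a &&& b = 0 →
    ((a + b) &&& m = 0 ↔ (a &&& m = 0 ∧ b &&& m = 0))
  | n, a, b, m, hn, hab => by
    rcases Nat.eq_zero_or_pos n with h0 | hpos
    · have : a = 0 ∧ b = 0 ∧ m = 0 := by omega
      obtain ⟨rfl, rfl, rfl⟩ := this
      simp
    · have hab2 : (a/2) &&& (b/2) = 0 := ((land_rec a b).1 hab).2
      have habp : ¬(a % 2 = 1 ∧ b % 2 = 1) := ((land_rec a b).1 hab).1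
      have hrec := land_split (a/2 + b/2 + m/2) (a/2) (b/2) (m/2) rfl hab2
      have hdiv : (a + b) / 2 = a/2 + b/2 := by omega
      rw [land_rec (a+b) m, land_rec a m, land_rec b m, hdiv, hrec]
      constructor
      · rintro ⟨h1, h2, h3⟩
        exact ⟨⟨by omega, h2⟩, ⟨by omega, h3⟩⟩
      · rintro ⟨⟨h1, h2⟩, ⟨h3, h4⟩⟩
        exact ⟨by omega, h2, h4⟩
  termination_by n a b m hn hab => n
  decreasing_by
    simp_wf
    omega


lemma bn_le_sum (B : Finset ℕ) : bn B ≤ ∑ x ∈ B, x := by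
  have := bn_add B; omega

lemma hp_dvd (B : Finset ℕ) : hp B ∣ Nat.factorial (bn B) := by
  rw [← Nat.factorization_le_iff_dvd (hp_pos B).ne' (Nat.factorial_ne_zero _)]
  rw [Finsupp.le_def]
  intro p
  by_cases pp : p.Prime
  · set b := ∑ x ∈ B, x with hbdef
    have hxb : ∀ x ∈ B, x ≤ b := fun x hx =>
      Finset.single_le_sum (f := fun x => x) (fun i _ => Nat.zero_le i) hx
    rw [fact_hp pp hxb, legendre pp (bn_le_sum B)]
    refine Finset.sum_le_sum (fun i _ => ?_)
    rw [Nat.le_div_iff_mul_le (Nat.pow_pos (n := i) pp.pos)]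
    rw [Nat.mul_comm]
    exact mul_cnt_le (Nat.pow_pos (n := i) pp.pos) B
  · rw [Nat.factorization_eq_zero_of_not_prime _ pp]
    exact Nat.zero_le _

/-- the partition with beta-set `B` is odd (has odd character degree) -/
def oddf (B : Finset ℕ) : Prop := Odd (Nat.factorial (bn B) / hp B)

lemma oddf_iff (B : Finset ℕ) : oddf B ↔ nuf (bn B) = (hp B).factorization 2 := by
  have hdvd := hp_dvd B
  have hle : hp B ≤ Nat.factorial (bn B) := Nat.le_of_dvd (Nat.factorial_pos _) hdvd
  have hd0 : Nat.factorial (bn B) / hp B ≠ 0 := by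
    have h := (Nat.one_le_div_iff (hp_pos B)).2 hle
    omega
  have hfac : (Nat.factorial (bn B) / hp B).factorization 2
      = nuf (bn B) - (hp B).factorization 2 := by
    rw [Nat.factorization_div hdvd]
    rfl
  have hnu := fact_le_of_dvd 2 hdvd (Nat.factorial_ne_zero (bn B))
  unfold oddf
  rw [Nat.odd_iff, ← Nat.two_dvd_ne_zero]
  rw [Nat.Prime.dvd_iff_one_le_factorization Nat.prime_two hd0]
  rw [hfac]
  unfold nuf at *
  omega

lemma cnt_two (B : Finset ℕ) : cnt 2 B = bn (cls 2 0 B) + bn (cls 2 1 B) := by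
  rw [cnt_eq (by omega)]
  rw [Finset.sum_range_succ, Finset.sum_range_succ, Finset.sum_range_zero]
  omega

lemma sum_cls_le (ε : ℕ) (B : Finset ℕ) : ∀ x ∈ cls 2 ε B, x ≤ ∑ z ∈ B, z := by
  intro x hx
  obtain ⟨z, hz, rfl⟩ := Finset.mem_image.1 hx
  have hzB : z ∈ B := (Finset.mem_filter.1 hz).1
  have h : z ≤ ∑ z ∈ B, z := by
    simpa using Finset.single_le_sum (f := fun (x:ℕ) => x) (fun i _ => Nat.zero_le i) hzB
  omega

lemma nuH_split (B : Finset ℕ) :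
    (hp B).factorization 2 = (bn (cls 2 0 B) + bn (cls 2 1 B))
      + ((hp (cls 2 0 B)).factorization 2 + (hp (cls 2 1 B)).factorization 2) := by
  have hxb : ∀ x ∈ B, x ≤ (∑ z ∈ B, z) + 1 := fun x hx => by
    have h : x ≤ ∑ z ∈ B, z := by
      simpa using Finset.single_le_sum (f := fun (x:ℕ) => x) (fun i _ => Nat.zero_le i) hx
    omega
  have hIcc : ∀ (c : ℕ) (F : ℕ → ℕ), ∑ i ∈ Icc 1 c, F i = ∑ j ∈ range c, F (1+j) := by
    intro c F
    rw [← Finset.Ico_add_one_right_eq_Icc, Finset.sum_Ico_eq_sum_range]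
    simp
  rw [fact_hp Nat.prime_two hxb, hIcc]
  rw [Finset.sum_range_succ' (fun j => cnt (2^(1+j)) B) (∑ z ∈ B, z)]
  have hstep : ∀ j : ℕ, cnt (2^(1+(j+1))) B
      = cnt (2^(1+j)) (cls 2 0 B) + cnt (2^(1+j)) (cls 2 1 B) := by
    intro j
    have he : (2:ℕ)^(1+(j+1)) = 2 * 2^(1+j) := by
      have h' : 1+(j+1) = (1+j)+1 := by omega
      rw [h', pow_succ]; ring
    rw [he, cnt_double (Nat.pow_pos (a := 2) (by omega)) B]
  rw [Finset.sum_congr rfl (fun j _ => hstep j), Finset.sum_add_distrib]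
  have h20 : (2:ℕ)^(1+0) = 2 := by norm_num
  rw [h20, cnt_two]
  rw [fact_hp Nat.prime_two (sum_cls_le 0 B), fact_hp Nat.prime_two (sum_cls_le 1 B), hIcc, hIcc]
  omega

lemma two_mul_le (B : Finset ℕ) : 2 * (bn (cls 2 0 B) + bn (cls 2 1 B)) ≤ bn B := by
  rw [← cnt_two]
  exact mul_cnt_le (by omega) B

lemma key_finset (B : Finset ℕ) :
    oddf B ↔ (bn B ≤ 2*(bn (cls 2 0 B) + bn (cls 2 1 B)) + 1
      ∧ oddf (cls 2 0 B) ∧ oddf (cls 2 1 B)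
      ∧ bn (cls 2 0 B) &&& bn (cls 2 1 B) = 0) := by
  have h2E : 2 * (bn (cls 2 0 B) + bn (cls 2 1 B)) ≤ bn B := two_mul_le B
  have hsplit := nuH_split B
  have hdv0 : (hp (cls 2 0 B)).factorization 2 ≤ nuf (bn (cls 2 0 B)) :=
    fact_le_of_dvd 2 (hp_dvd _) (Nat.factorial_ne_zero _)
  have hdv1 : (hp (cls 2 1 B)).factorization 2 ≤ nuf (bn (cls 2 1 B)) :=
    fact_le_of_dvd 2 (hp_dvd _) (Nat.factorial_ne_zero _)
  have hstepn : nuf (bn B) = bn B / 2 + nuf (bn B / 2) := nu_step (bn B)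
  have hmonoE : nuf (bn (cls 2 0 B) + bn (cls 2 1 B)) ≤ nuf (bn B / 2) := nu_mono (by omega)
  have haddle : nuf (bn (cls 2 0 B)) + nuf (bn (cls 2 1 B))
      ≤ nuf (bn (cls 2 0 B) + bn (cls 2 1 B)) := nu_add_le _ _
  have hlanden := nu_add_eq_iff (bn (cls 2 0 B) + bn (cls 2 1 B))
    (bn (cls 2 0 B)) (bn (cls 2 1 B)) rfl
  rw [oddf_iff B, oddf_iff (cls 2 0 B), oddf_iff (cls 2 1 B), hsplit, ← hlanden]
  constructor
  · intro heq
    have hE : bn (cls 2 0 B) + bn (cls 2 1 B) = bn B / 2 := by omega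
    rw [← hE] at hstepn
    refine ⟨by omega, by omega, by omega, by omega⟩
  · rintro ⟨hle, h0, h1, hland⟩
    have hE : bn (cls 2 0 B) + bn (cls 2 1 B) = bn B / 2 := by omega
    rw [← hE] at hstepn
    omega


open OldPartition

variable {l : OldPartition} {N : ℕ}

lemma parts_zero_ge (hN : l.parts N = 0) {i : ℕ} (hi : N ≤ i) : l.parts i = 0 :=
  Nat.le_zero.1 (hN ▸ l.antitone hi)

lemma parts_lt_of_pos (hN : l.parts N = 0) {i : ℕ} (hi : 0 < l.parts i) : i < N := by
  by_contra h
  have := parts_zero_ge hN (by omega : N ≤ i)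
  omega

lemma e_lt {i i' : ℕ} (hii' : i < i') (hi' : i' < N) :
    l.parts i' + (N - 1 - i') < l.parts i + (N - 1 - i) := by
  have h := l.antitone (le_of_lt hii')
  omega

lemma e_injOn : ∀ i ∈ range N, ∀ i' ∈ range N,
    l.parts i + (N - 1 - i) = l.parts i' + (N - 1 - i') → i = i' := by
  intro i hi i' hi' h
  rcases lt_trichotomy i i' with hlt | heq | hgt
  · have := e_lt (l := l) hlt (mem_range.1 hi'); omega
  · exact heq
  · have := e_lt (l := l) hgt (mem_range.1 hi); omega

lemma card_betaSet (l : OldPartition) (N : ℕ) : (l.betaSet N).card = N := by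
  rw [betaSet, Finset.card_image_of_injOn e_injOn, card_range]

lemma mem_betaSet {x : ℕ} : x ∈ l.betaSet N ↔ ∃ i < N, l.parts i + (N - 1 - i) = x := by
  simp [betaSet]

lemma size_eq_sum (hN : l.parts N = 0) : l.size = ∑ i ∈ range N, l.parts i := by
  rw [size]
  exact finsum_eq_sum_of_support_subset _ (by
    intro i hi
    simp only [Function.mem_support] at hi
    simp only [coe_range, Set.mem_Iio]
    exact parts_lt_of_pos hN (by omega))

lemma sum_betaSet (l : OldPartition) (N : ℕ) :
    ∑ x ∈ l.betaSet N, x = (∑ i ∈ range N, l.parts i) + N.choose 2 := by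
  rw [betaSet, Finset.sum_image e_injOn, Finset.sum_add_distrib]
  congr 1
  have h1 : ∑ i ∈ range N, (N - 1 - i) = ∑ i ∈ range N, i := by
    have := Finset.sum_range_reflect (fun i => i) N
    simpa using this
  rw [h1]
  have h2 := Finset.sum_range_id_mul_two N
  have h3 : N.choose 2 = N * (N-1) / 2 := Nat.choose_two_right N
  omega

lemma size_eq (hN : l.parts N = 0) : l.size = bn (l.betaSet N) := by
  have h1 := bn_add (l.betaSet N)
  rw [card_betaSet, sum_betaSet, ← size_eq_sum hN] at h1
  omega

lemma conj_card (hN : l.parts N = 0) (j : ℕ) :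
    l.conjParts j = ((range N).filter (fun i => j < l.parts i)).card := by
  rw [conjParts]
  have hST : {i : ℕ | j < l.parts i} = ↑((range N).filter (fun i => j < l.parts i)) := by
    ext i
    simp only [Set.mem_setOf_eq, coe_filter, mem_range, Set.mem_setOf_eq]
    exact ⟨fun h => ⟨parts_lt_of_pos hN (by omega), h⟩, fun h => h.2⟩
  rw [hST, Nat.card_coe_set_eq, Set.ncard_coe_finset]

lemma conj_lt_iff (hN : l.parts N = 0) (i j : ℕ) :
    j < l.parts i ↔ i < l.conjParts j := by
  rw [conj_card hN]
  set T := (range N).filter (fun i => j < l.parts i) with hT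
  have hdc : T = range T.card := by
    refine downclosed_eq_range T (fun c hc hc0 => ?_)
    obtain ⟨hcN, hcj⟩ := Finset.mem_filter.1 hc
    refine Finset.mem_filter.2 ⟨mem_range.2 (by have := mem_range.1 hcN; omega), ?_⟩
    have := l.antitone (by omega : c - 1 ≤ c)
    omega
  constructor
  · intro h
    have hiT : i ∈ T := Finset.mem_filter.2 ⟨mem_range.2 (parts_lt_of_pos hN (by omega)), h⟩
    rw [hdc] at hiT
    exact mem_range.1 hiT
  · intro h
    have hiT : i ∈ T := by rw [hdc]; exact mem_range.2 h
    exact (Finset.mem_filter.1 hiT).2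

lemma conj_le (hN : l.parts N = 0) (j : ℕ) : l.conjParts j ≤ N := by
  rw [conj_card hN]
  calc ((range N).filter (fun i => j < l.parts i)).card ≤ (range N).card :=
        Finset.card_le_card (Finset.filter_subset _ _)
  _ = N := card_range N

lemma conj_anti (hN : l.parts N = 0) {j j' : ℕ} (h : j ≤ j') :
    l.conjParts j' ≤ l.conjParts j := by
  rw [conj_card hN, conj_card hN]
  exact Finset.card_le_card (Finset.monotone_filter_right _ (fun i hi => by omega))

lemma row_eq (hN : l.parts N = 0) (i : ℕ) (hi : i < N) :
    ∏ j ∈ range (l.parts i), l.hookLength i j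
      = ∏ y ∈ (range (l.parts i + (N-1-i))).filter (· ∉ l.betaSet N),
          (l.parts i + (N-1-i) - y) := by
  set ei := l.parts i + (N-1-i) with hei
  set w : ℕ → ℕ := fun j => N + j - l.conjParts j with hw
  have hconj : ∀ j, j < l.parts i → i < l.conjParts j ∧ l.conjParts j ≤ N :=
    fun j hj => ⟨(conj_lt_iff hN i j).1 hj, conj_le hN j⟩
  have hmaps : ∀ j ∈ range (l.parts i), w j ∈ (range ei).filter (· ∉ l.betaSet N) := by
    intro j hj
    have hj' : j < l.parts i := mem_range.1 hj
    obtain ⟨hic, hcN⟩ := hconj j hj'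
    refine Finset.mem_filter.2 ⟨mem_range.2 (by simp only [hw, hei]; omega), ?_⟩
    intro hmem
    obtain ⟨i', hi'N, hi'⟩ := mem_betaSet.1 hmem
    by_cases hc : j < l.parts i'
    · have h1 : i' < l.conjParts j := (conj_lt_iff hN i' j).1 hc
      simp only [hw] at hi'
      omega
    · have h1 : ¬ (i' < l.conjParts j) := fun hcon => hc ((conj_lt_iff hN i' j).2 hcon)
      simp only [hw] at hi'
      omega
  have hwmono : ∀ j j' : ℕ, j < j' → j' < l.parts i → w j < w j' := by
    intro j j' hjj' hj'
    have h1 := conj_anti hN (le_of_lt hjj')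
    obtain ⟨-, h2⟩ := hconj j (by omega)
    simp only [hw]
    omega
  have hinj : ∀ j ∈ range (l.parts i), ∀ j' ∈ range (l.parts i), w j = w j' → j = j' := by
    intro j hj j' hj' h
    rcases lt_trichotomy j j' with hlt | heq | hgt
    · have := hwmono j j' hlt (mem_range.1 hj'); omega
    · exact heq
    · have := hwmono j' j hgt (mem_range.1 hj); omega
  -- card of target
  have hcardT : ((range ei).filter (· ∉ l.betaSet N)).card = l.parts i := by
    have hsplit := Finset.card_filter_add_card_filter_not
      (s := range ei) (p := (· ∉ l.betaSet N))
    rw [card_range] at hsplit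
    have hin : (range ei).filter (fun y => ¬ y ∉ l.betaSet N)
        = (l.betaSet N).filter (· < ei) := by
      ext y; simp only [Finset.mem_filter, mem_range, not_not]
      tauto
    have hBf : ((l.betaSet N).filter (· < ei)).card = N - 1 - i := by
      have him : (l.betaSet N).filter (· < ei)
          = ((range N).filter (fun i' => i < i')).image (fun i' => l.parts i' + (N - 1 - i')) := by
        ext x
        simp only [Finset.mem_filter, mem_betaSet, Finset.mem_image, mem_range]
        constructor
        · rintro ⟨⟨i', hi'N, rfl⟩, hlt⟩
          refine ⟨i', ⟨hi'N, ?_⟩, rfl⟩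
          by_contra hcon
          push_neg at hcon
          rcases Nat.eq_or_lt_of_le hcon with heq | hlt2
          · subst heq; omega
          · have := e_lt (l := l) hlt2 hi
            omega
        · rintro ⟨i', ⟨hi'N, hii'⟩, rfl⟩
          exact ⟨⟨i', hi'N, rfl⟩, e_lt hii' hi'N⟩
      rw [him, Finset.card_image_of_injOn (fun a ha b hb h =>
        e_injOn a (mem_range.2 (mem_range.1 (Finset.mem_filter.1 ha).1))
          b (mem_range.2 (mem_range.1 (Finset.mem_filter.1 hb).1)) h)]
      have : (range N).filter (fun i' => i < i') = Ico (i+1) N := by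
        ext x; simp only [Finset.mem_filter, mem_range, mem_Ico]; omega
      rw [this, Nat.card_Ico]
      omega
    rw [hin, hBf] at hsplit
    rw [hei] at hsplit ⊢
    omega
  -- image = target
  have himeq : (range (l.parts i)).image w = (range ei).filter (· ∉ l.betaSet N) := by
    refine Finset.eq_of_subset_of_card_le ?_ ?_
    · intro y hy
      obtain ⟨j, hj, rfl⟩ := Finset.mem_image.1 hy
      exact hmaps j hj
    · rw [hcardT, Finset.card_image_of_injOn hinj, card_range]
  rw [← himeq, Finset.prod_image hinj]
  refine Finset.prod_congr rfl (fun j hj => ?_)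
  have hj' : j < l.parts i := mem_range.1 hj
  obtain ⟨hic, hcN⟩ := hconj j hj'
  rw [hookLength]
  simp only [hw, hei]
  omega

lemma hp_eq (hN : l.parts N = 0) :
    (∏ᶠ (p : ℕ × ℕ) (_ : p.2 < l.parts p.1), l.hookLength p.1 p.2) = hp (l.betaSet N) := by
  classical
  set D := (range N ×ˢ range (l.parts 0 + 1)).filter (fun p => p.2 < l.parts p.1) with hD
  have hset : {p : ℕ × ℕ | p.2 < l.parts p.1} = ↑D := by
    ext ⟨i, j⟩
    simp only [Set.mem_setOf_eq, hD, coe_filter, Finset.mem_product, mem_range,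
      Set.mem_setOf_eq]
    constructor
    · intro h
      have hiN : i < N := parts_lt_of_pos hN (by omega)
      have := l.antitone (Nat.zero_le i)
      exact ⟨⟨hiN, by omega⟩, h⟩
    · rintro ⟨-, h⟩; exact h
  have h1 : (∏ᶠ (p : ℕ × ℕ) (_ : p.2 < l.parts p.1), l.hookLength p.1 p.2)
      = ∏ p ∈ D, l.hookLength p.1 p.2 := by
    calc (∏ᶠ (p : ℕ × ℕ) (_ : p.2 < l.parts p.1), l.hookLength p.1 p.2)
        = ∏ᶠ (p : ℕ × ℕ) (_ : p ∈ {p : ℕ × ℕ | p.2 < l.parts p.1}), l.hookLength p.1 p.2 := rfl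
    _ = ∏ᶠ (p : ℕ × ℕ) (_ : p ∈ (↑D : Set (ℕ × ℕ))), l.hookLength p.1 p.2 := by rw [hset]
    _ = ∏ p ∈ D, l.hookLength p.1 p.2 := finprod_mem_coe_finset _ D
  rw [h1, hD, Finset.prod_filter, Finset.prod_product]
  have h2 : ∀ i ∈ range N,
      (∏ j ∈ range (l.parts 0 + 1), if j < l.parts i then l.hookLength i j else 1)
        = ∏ j ∈ range (l.parts i), l.hookLength i j := by
    intro i hi
    have hsub : range (l.parts i) ⊆ range (l.parts 0 + 1) :=
      Finset.range_subset_range.2 (by have := l.antitone (Nat.zero_le i); omega)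
    rw [← Finset.prod_subset hsub (fun x hx hnx => if_neg (by simpa using hnx))]
    exact Finset.prod_congr rfl (fun j hj => if_pos (mem_range.1 hj))
  rw [Finset.prod_congr rfl h2]
  have h3 : ∀ i ∈ range N, ∏ j ∈ range (l.parts i), l.hookLength i j
      = ∏ y ∈ (range (l.parts i + (N-1-i))).filter (· ∉ l.betaSet N),
          (l.parts i + (N-1-i) - y) := fun i hi => row_eq hN i (mem_range.1 hi)
  rw [Finset.prod_congr rfl h3]
  rw [hp, betaSet, Finset.prod_image e_injOn]

lemma degree_eq (hN : l.parts N = 0) :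
    l.degree = Nat.factorial (bn (l.betaSet N)) / hp (l.betaSet N) := by
  rw [degree, hp_eq hN, ← size_eq hN]


/-! ### existence of a partition with a given beta-set -/

lemma exists_partition (S : Finset ℕ) :
    ∃ l : OldPartition, (∀ i, S.card ≤ i → l.parts i = 0) ∧ l.betaSet S.card = S := by
  classical
  set k := S.card with hk
  set iso := S.orderIsoOfFin hk.symm with hiso
  let e' : ℕ → ℕ := fun j => if h : j < k then (iso ⟨j, h⟩ : ℕ) else 0
  have he'pos : ∀ (j : ℕ) (h : j < k), e' j = (iso ⟨j, h⟩ : ℕ) := fun j h => dif_pos h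
  have hmono : ∀ a b : ℕ, a < b → b < k → e' a < e' b := by
    intro a b hab hb
    have ha : a < k := by omega
    have h1 : iso ⟨a, ha⟩ < iso ⟨b, hb⟩ := iso.strictMono (by exact hab)
    rw [he'pos a ha, he'pos b hb]
    exact h1
  have hgap : ∀ d a : ℕ, a + d < k → e' a + d ≤ e' (a + d) := by
    intro d
    induction d with
    | zero => intro a _; simp
    | succ d ih =>
      intro a h
      have h1 := ih a (by omega)
      have h2 : e' (a+d) < e' (a+d+1) := hmono (a+d) (a+d+1) (by omega) (by omega)
      have h3 : a + (d+1) = (a+d)+1 := by omega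
      rw [h3]
      omega
  have hge : ∀ a : ℕ, a < k → a ≤ e' a := by
    intro a ha
    have h := hgap a 0 (by omega)
    simp only [Nat.zero_add] at h
    omega
  let pf : ℕ → ℕ := fun i => if i < k then e' (k-1-i) - (k-1-i) else 0
  have hpfpos : ∀ i, i < k → pf i = e' (k-1-i) - (k-1-i) := fun i h => if_pos h
  have hpfneg : ∀ i, k ≤ i → pf i = 0 := fun i h => if_neg (by omega)
  have hanti : Antitone pf := by
    intro i i' hii'
    by_cases h' : i' < k
    · have h : i < k := by omega
      rw [hpfpos i' h', hpfpos i h]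
      set a := k-1-i' with hadef
      set b := k-1-i with hbdef
      have h1 := hgap (b - a) a (by omega)
      have h2 : a + (b - a) = b := by omega
      rw [h2] at h1
      have h3 := hge a (by omega)
      omega
    · rw [hpfneg i' (by omega)]
      exact Nat.zero_le _
  refine ⟨⟨pf, hanti, ⟨k, hpfneg k le_rfl⟩⟩, fun i hi => hpfneg i hi, ?_⟩
  show (Finset.range k).image (fun i => pf i + (k - 1 - i)) = S
  ext x
  simp only [Finset.mem_image, Finset.mem_range]
  constructor
  · rintro ⟨i, hik, hx⟩
    rw [hpfpos i hik] at hx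
    have h3 := hge (k-1-i) (by omega)
    have h4 : e' (k-1-i) = x := by omega
    rw [he'pos (k-1-i) (by omega)] at h4
    rw [← h4]
    exact (iso ⟨k-1-i, by omega⟩).2
  · intro hx
    obtain ⟨a, ha⟩ := iso.surjective ⟨x, hx⟩
    obtain ⟨av, havk⟩ := a
    have hx' : e' av = x := by
      rw [he'pos av havk, ha]
    refine ⟨k - 1 - av, by omega, ?_⟩
    have hkk : k - 1 - (k - 1 - av) = av := by omega
    rw [hpfpos (k-1-av) (by omega), hkk]
    have h3 := hge av havk
    omega

/-! ### beta-set shift and qsum -/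

lemma betaSet_succ {l : OldPartition} {N : ℕ} (hN : l.parts N = 0) :
    l.betaSet (N+1) = insert 0 ((l.betaSet N).image (· + 1)) := by
  ext x
  rw [mem_betaSet, Finset.mem_insert]
  constructor
  · rintro ⟨i, hiN, hx⟩
    rcases Nat.lt_or_ge i N with hi | hi
    · right
      refine Finset.mem_image.2 ⟨l.parts i + (N-1-i), mem_betaSet.2 ⟨i, hi, rfl⟩, ?_⟩
      show l.parts i + (N-1-i) + 1 = x
      omega
    · left
      have hiN' : i = N := by omega
      subst hiN'
      rw [hN] at hx
      omega
  · rintro (rfl | hmem)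
    · refine ⟨N, by omega, ?_⟩
      rw [hN]
      omega
    · obtain ⟨y, hy, rfl⟩ := Finset.mem_image.1 hmem
      obtain ⟨i, hiN, hx⟩ := mem_betaSet.1 hy
      refine ⟨i, by omega, ?_⟩
      show l.parts i + (N + 1 - 1 - i) = y + 1
      omega

lemma cls_shift0 (X : Finset ℕ) :
    cls 2 0 (insert 0 (X.image (· + 1))) = insert 0 ((cls 2 1 X).image (· + 1)) := by
  ext z
  rw [mem_cls (by omega : (0:ℕ) < 2)]
  constructor
  · intro h
    rcases Finset.mem_insert.1 h with h0 | hmem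
    · exact Finset.mem_insert.2 (Or.inl (by omega))
    · obtain ⟨w, hw, hweq⟩ := Finset.mem_image.1 hmem
      have hweq' : w + 1 = 2 * z + 0 := hweq
      have hz1 : 1 ≤ z := by omega
      have hwodd : w = 2*(z-1)+1 := by omega
      refine Finset.mem_insert.2 (Or.inr (Finset.mem_image.2 ⟨z - 1,
        (mem_cls (by omega : (1:ℕ) < 2)).2 (by rw [← hwodd]; exact hw), ?_⟩))
      show z - 1 + 1 = z
      omega
  · intro h
    rcases Finset.mem_insert.1 h with rfl | hmem
    · show 2 * 0 + 0 ∈ insert 0 (X.image (· + 1))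
      simp
    · obtain ⟨u, hu, rfl⟩ := Finset.mem_image.1 hmem
      have hmem2 := (mem_cls (by omega : (1:ℕ) < 2)).1 hu
      refine Finset.mem_insert.2 (Or.inr (Finset.mem_image.2 ⟨2*u+1, hmem2, ?_⟩))
      show 2*u+1+1 = 2*(u+1) + 0
      ring

lemma cls_shift1 (X : Finset ℕ) :
    cls 2 1 (insert 0 (X.image (· + 1))) = cls 2 0 X := by
  ext z
  rw [mem_cls (by omega : (1:ℕ) < 2), mem_cls (by omega : (0:ℕ) < 2)]
  constructor
  · intro h
    rcases Finset.mem_insert.1 h with h0 | hmem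
    · omega
    · obtain ⟨w, hw, hweq⟩ := Finset.mem_image.1 hmem
      have hweq' : w + 1 = 2 * z + 1 := hweq
      have hw2 : w = 2*z := by omega
      rwa [hw2] at hw
  · intro h
    refine Finset.mem_insert.2 (Or.inr (Finset.mem_image.2 ⟨2*z+0, h, ?_⟩))
    show 2*z+0+1 = 2*z+1
    ring

noncomputable def qsum (l : OldPartition) : ℕ :=
  bn (cls 2 0 (l.betaSet l.finite.choose)) + bn (cls 2 1 (l.betaSet l.finite.choose))

lemma qsum_step {l : OldPartition} {N : ℕ} (hN : l.parts N = 0) :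
    bn (cls 2 0 (l.betaSet (N+1))) + bn (cls 2 1 (l.betaSet (N+1)))
      = bn (cls 2 0 (l.betaSet N)) + bn (cls 2 1 (l.betaSet N)) := by
  rw [betaSet_succ hN, cls_shift0, cls_shift1, bn_insert_zero_shift]
  omega

lemma qsum_spec {l : OldPartition} {N : ℕ} (hN : l.parts N = 0) :
    bn (cls 2 0 (l.betaSet N)) + bn (cls 2 1 (l.betaSet N)) = qsum l := by
  have key : ∀ (M : ℕ) (hM : l.parts M = 0) (d : ℕ),
      bn (cls 2 0 (l.betaSet (M+d))) + bn (cls 2 1 (l.betaSet (M+d)))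
        = bn (cls 2 0 (l.betaSet M)) + bn (cls 2 1 (l.betaSet M)) := by
    intro M hM d
    induction d with
    | zero => rfl
    | succ d ih =>
      have : M + (d+1) = (M+d)+1 := by omega
      rw [this, qsum_step (parts_zero_ge hM (by omega)), ih]
  have hN0 := l.finite.choose_spec
  set N0 := l.finite.choose with hN0def
  have h1 := key N hN (max N N0 - N)
  have h2 := key N0 hN0 (max N N0 - N0)
  rw [(by omega : N + (max N N0 - N) = max N N0)] at h1
  rw [(by omega : N0 + (max N N0 - N0) = max N N0)] at h2
  rw [qsum, ← hN0def, ← h2, ← h1]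

/-! ### hook removal -/

lemma bn_remove {X : Finset ℕ} {z : ℕ} (hz : z ∈ X) (hz1 : z ≠ 0) (hz2 : z - 1 ∉ X) :
    bn (insert (z-1) (X.erase z)) + 1 = bn X := by
  have h1 : z - 1 ∉ X.erase z := fun h => hz2 (Finset.mem_of_mem_erase h)
  have hsum : ∑ x ∈ insert (z-1) (X.erase z), x = (∑ x ∈ X, x) - 1 := by
    rw [Finset.sum_insert h1]
    have hadd : z + ∑ x ∈ X.erase z, x = ∑ x ∈ X, x := by
      simpa using Finset.add_sum_erase X (fun x => x) hz
    have hzle : z ≤ ∑ x ∈ X, x := by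
      have h := Finset.single_le_sum (f := fun (x:ℕ) => x) (fun i _ => Nat.zero_le i) hz
      simpa using h
    omega
  have hcard : (insert (z-1) (X.erase z)).card = X.card := by
    rw [Finset.card_insert_of_notMem h1, Finset.card_erase_of_mem hz]
    have : 0 < X.card := Finset.card_pos.2 ⟨z, hz⟩
    omega
  have hb1 := bn_add (insert (z-1) (X.erase z))
  have hb2 := bn_add X
  have hzle : z ≤ ∑ x ∈ X, x := by
    have h := Finset.single_le_sum (f := fun (x:ℕ) => x) (fun i _ => Nat.zero_le i) hz
    simpa using h
  rw [hcard] at hb1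
  omega

lemma remove_size {a b : OldPartition} (h : RemoveHook a b 2) :
    a.size = b.size + 2 ∧ qsum a = qsum b + 1 := by
  obtain ⟨N, haN, hbN, x, hxB, hx2, hxnB, hbeta⟩ := h
  have he : 2 * (x / 2) + x % 2 = x := Nat.div_add_mod x 2
  have hmod2 : x % 2 < 2 := Nat.mod_lt x (by omega)
  -- size part
  have hsum : ∑ y ∈ insert (x-2) ((a.betaSet N).erase x), y = (∑ y ∈ a.betaSet N, y) - 2 := by
    have h1 : x - 2 ∉ (a.betaSet N).erase x := fun hmem => hxnB (Finset.mem_of_mem_erase hmem)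
    rw [Finset.sum_insert h1]
    have hadd : x + ∑ y ∈ (a.betaSet N).erase x, y = ∑ y ∈ a.betaSet N, y := by
      simpa using Finset.add_sum_erase (a.betaSet N) (fun y => y) hxB
    have hzle : x ≤ ∑ y ∈ a.betaSet N, y := by
      have h2 := Finset.single_le_sum (f := fun (y:ℕ) => y) (fun i _ => Nat.zero_le i) hxB
      simpa using h2
    omega
  have hcard : (insert (x-2) ((a.betaSet N).erase x)).card = N := by
    have h1 : x - 2 ∉ (a.betaSet N).erase x := fun hmem => hxnB (Finset.mem_of_mem_erase hmem)
    rw [Finset.card_insert_of_notMem h1, Finset.card_erase_of_mem hxB, card_betaSet]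
    have : 0 < (a.betaSet N).card := Finset.card_pos.2 ⟨x, hxB⟩
    rw [card_betaSet] at this
    omega
  have hsize : a.size = b.size + 2 := by
    have h1 := size_eq haN
    have h2 := size_eq hbN
    rw [hbeta] at h2
    have hb1 := bn_add (insert (x-2) ((a.betaSet N).erase x))
    have hb2 := bn_add (a.betaSet N)
    rw [hcard, hsum] at hb1
    rw [card_betaSet] at hb2
    have hzle : x ≤ ∑ y ∈ a.betaSet N, y := by
      have h3 := Finset.single_le_sum (f := fun (y:ℕ) => y) (fun i _ => Nat.zero_le i) hxB
      simpa using h3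
    omega
  refine ⟨hsize, ?_⟩
  -- qsum part
  have hcls_same : cls 2 (1 - x % 2) (insert (x-2) ((a.betaSet N).erase x))
      = cls 2 (1 - x % 2) (a.betaSet N) := by
    ext z
    rw [mem_cls (by omega : 1 - x % 2 < 2), mem_cls (by omega : 1 - x % 2 < 2),
      Finset.mem_insert, Finset.mem_erase]
    constructor
    · rintro (habs | ⟨-, hmem⟩)
      · omega
      · exact hmem
    · intro hmem
      exact Or.inr ⟨by omega, hmem⟩
  have hcls_move : cls 2 (x % 2) (insert (x-2) ((a.betaSet N).erase x))
      = insert (x/2 - 1) ((cls 2 (x % 2) (a.betaSet N)).erase (x/2)) := by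
    ext z
    rw [mem_cls hmod2, Finset.mem_insert, Finset.mem_erase, Finset.mem_insert, Finset.mem_erase,
      mem_cls hmod2]
    constructor
    · rintro (heq | ⟨hne, hmem⟩)
      · left; omega
      · right; exact ⟨by omega, hmem⟩
    · rintro (rfl | ⟨hne, hmem⟩)
      · left; omega
      · right; exact ⟨by omega, hmem⟩
  have hzcls : x / 2 ∈ cls 2 (x % 2) (a.betaSet N) := (mem_cls hmod2).2 (by rw [he]; exact hxB)
  have hzcls1 : x / 2 ≠ 0 := by omega
  have hzcls2 : x / 2 - 1 ∉ cls 2 (x % 2) (a.betaSet N) := by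
    intro hmem
    have h1 := (mem_cls hmod2).1 hmem
    have h2 : 2 * (x/2 - 1) + x % 2 = x - 2 := by omega
    rw [h2] at h1
    exact hxnB h1
  have hbnrem := bn_remove hzcls hzcls1 hzcls2
  have hq1 := qsum_spec haN
  have hq2 := qsum_spec hbN
  rw [hbeta] at hq2
  rcases (by omega : x % 2 = 0 ∨ x % 2 = 1) with hx0 | hx1
  · rw [hx0] at hcls_move hbnrem
    have hs : (1 - x % 2) = 1 := by omega
    rw [hs] at hcls_same
    rw [hcls_same, hcls_move] at hq2
    omega
  · rw [hx1] at hcls_move hbnrem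
    have hs : (1 - x % 2) = 0 := by omega
    rw [hs] at hcls_same
    rw [hcls_same, hcls_move] at hq2
    omega

/-! ### cores -/

lemma no_hook_qsum {c : OldPartition} (h : ∀ b, ¬ RemoveHook c b 2) : qsum c = 0 := by
  by_contra hne
  have hN0 := c.finite.choose_spec
  set N0 := c.finite.choose with hN0def
  have hq := qsum_spec hN0
  have main : ∀ ε, ε < 2 → bn (cls 2 ε (c.betaSet N0)) ≠ 0 → False := by
    intro ε hε hbn
    obtain ⟨z, hz, hz0, hz1⟩ := exists_unpacked _ hbn
    have hx : 2*z+ε ∈ c.betaSet N0 := (mem_cls hε).1 hz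
    have hxn : 2*z+ε - 2 ∉ c.betaSet N0 := by
      intro hmem
      have h2 : 2*z+ε-2 = 2*(z-1)+ε := by omega
      rw [h2] at hmem
      exact hz1 ((mem_cls hε).2 hmem)
    set S := insert (2*z+ε-2) ((c.betaSet N0).erase (2*z+ε)) with hS
    have hcardS : S.card = N0 := by
      have h1 : 2*z+ε-2 ∉ (c.betaSet N0).erase (2*z+ε) := fun hmem =>
        hxn (Finset.mem_of_mem_erase hmem)
      rw [hS, Finset.card_insert_of_notMem h1, Finset.card_erase_of_mem hx, card_betaSet]
      have h2 : 0 < (c.betaSet N0).card := Finset.card_pos.2 ⟨_, hx⟩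
      rw [card_betaSet] at h2
      omega
    obtain ⟨m, hm0, hmbeta⟩ := exists_partition S
    rw [hcardS] at hm0 hmbeta
    exact h m ⟨N0, hN0, hm0 N0 le_rfl, 2*z+ε, hx, by omega, hxn, hmbeta⟩
  rcases (by omega : bn (cls 2 0 (c.betaSet N0)) ≠ 0 ∨ bn (cls 2 1 (c.betaSet N0)) ≠ 0) with h0 | h1
  · exact main 0 (by omega) h0
  · exact main 1 (by omega) h1

lemma core_size {x c : OldPartition} (h : IsECore 2 x c) : c.size + 2 * qsum x = x.size := by
  obtain ⟨hchain, hcore⟩ := h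
  induction hchain using Relation.ReflTransGen.head_induction_on with
  | refl => rw [no_hook_qsum hcore]; ring
  | head hab _ ih =>
    obtain ⟨h1, h2⟩ := remove_size hab
    omega

lemma core_exists_aux : ∀ (n : ℕ) (x : OldPartition), qsum x ≤ n → ∃ c, IsECore 2 x c
  | n, x, hn => by
    by_cases h : ∀ b, ¬ RemoveHook x b 2
    · exact ⟨x, Relation.ReflTransGen.refl, h⟩
    · push_neg at h
      obtain ⟨b, hb⟩ := h
      have hq := (remove_size hb).2
      have hlt : qsum b ≤ n - 1 := by omega
      obtain ⟨c, hc1, hc2⟩ := core_exists_aux (n-1) b hlt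
      exact ⟨c, Relation.ReflTransGen.head hb hc1, hc2⟩
  termination_by n x hn => n
  decreasing_by
    simp_wf
    omega

lemma core_exists (x : OldPartition) : ∃ c, IsECore 2 x c :=
  core_exists_aux (qsum x) x le_rfl

/-! ### quotients -/

lemma quot_sizes {x l0 l1 : OldPartition} (h : IsQuotient2 x l0 l1) :
    ∃ N, x.parts N = 0
      ∧ l0.size = bn (cls 2 0 (x.betaSet N)) ∧ l1.size = bn (cls 2 1 (x.betaSet N))
      ∧ (l0.IsOdd ↔ oddf (cls 2 0 (x.betaSet N)))
      ∧ (l1.IsOdd ↔ oddf (cls 2 1 (x.betaSet N))) := by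
  obtain ⟨N, -, hxN, h0p, h1p, h0b, h1b⟩ := h
  have hc0 : cls 2 0 (x.betaSet N) = ((x.betaSet N).filter (fun z => z % 2 = 0)).image (fun z => z / 2) := rfl
  have hc1 : cls 2 1 (x.betaSet N) = ((x.betaSet N).filter (fun z => z % 2 = 1)).image (fun z => z / 2) := rfl
  refine ⟨N, hxN, ?_, ?_, ?_, ?_⟩
  · rw [size_eq h0p, h0b, hc0]
  · rw [size_eq h1p, h1b, hc1]
  · rw [IsOdd, degree_eq h0p, h0b, hc0]
    exact Iff.rfl
  · rw [IsOdd, degree_eq h1p, h1b, hc1]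
    exact Iff.rfl

lemma keyP_a {x l0 l1 : OldPartition} (h : IsQuotient2 x l0 l1) :
    l0.size + l1.size = qsum x := by
  obtain ⟨N, hxN, h0, h1, -, -⟩ := quot_sizes h
  rw [h0, h1, qsum_spec hxN]

lemma keyP_b {x l0 l1 : OldPartition} (h : IsQuotient2 x l0 l1) :
    x.IsOdd ↔ (x.size ≤ 2*(l0.size + l1.size) + 1 ∧ l0.IsOdd ∧ l1.IsOdd
      ∧ l0.size &&& l1.size = 0) := by
  obtain ⟨N, hxN, h0, h1, ho0, ho1⟩ := quot_sizes h
  have hx : x.IsOdd ↔ oddf (x.betaSet N) := by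
    rw [IsOdd, degree_eq hxN]
    exact Iff.rfl
  rw [hx, key_finset, size_eq hxN, ho0, ho1, h0, h1]

lemma quot_exists (x : OldPartition) : ∃ l0 l1, IsQuotient2 x l0 l1 := by
  obtain ⟨N0, hN0⟩ := x.finite
  have hNN : x.parts (N0 + N0) = 0 := parts_zero_ge hN0 (by omega)
  set B := x.betaSet (N0+N0) with hB
  obtain ⟨m0, hm00, hm0b⟩ := exists_partition (cls 2 0 B)
  obtain ⟨m1, hm10, hm1b⟩ := exists_partition (cls 2 1 B)
  have hcard0 : (cls 2 0 B).card = (B.filter (fun z => z % 2 = 0)).card := card_cls B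
  have hcard1 : (cls 2 1 B).card = (B.filter (fun z => z % 2 = 1)).card := card_cls B
  refine ⟨m0, m1, N0+N0, ⟨N0, by ring⟩, hNN, ?_, ?_, ?_, ?_⟩
  · rw [← hcard0]; exact hm00 _ le_rfl
  · rw [← hcard1]; exact hm10 _ le_rfl
  · rw [← hcard0, hm0b]; rfl
  · rw [← hcard1, hm1b]; rfl


lemma sum_mod_le_one (M : ℕ) (s : ℕ → ℕ)
    (h : ∀ i < M, ∀ j < M, i ≠ j → ¬(s i % 2 = 1 ∧ s j % 2 = 1)) :
    (∑ i ∈ range M, s i % 2) ≤ 1 := by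
  induction M with
  | zero => simp
  | succ M ih =>
    rw [Finset.sum_range_succ]
    by_cases hM : s M % 2 = 1
    · have hz : ∀ i ∈ range M, s i % 2 = 0 := by
        intro i hi
        have := h i (by have := mem_range.1 hi; omega) M (by omega)
          (by have := mem_range.1 hi; omega)
        omega
      rw [Finset.sum_congr rfl hz, Finset.sum_const_zero]
      omega
    · have := ih (fun i hi j hj hij => h i (by omega) j (by omega) hij)
      omega

lemma disj_children {a b c d : ℕ} (hab : a &&& b = 0) (hcd : c &&& d = 0)
    (h : (a+b) &&& (c+d) = 0) :
    a &&& c = 0 ∧ a &&& d = 0 ∧ b &&& c = 0 ∧ b &&& d = 0 := by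
  obtain ⟨h1, h2⟩ := (land_split (a+b+(c+d)) a b (c+d) rfl hab).1 h
  have h1' : (c+d) &&& a = 0 := by rw [Nat.land_comm]; exact h1
  have h2' : (c+d) &&& b = 0 := by rw [Nat.land_comm]; exact h2
  obtain ⟨h3, h4⟩ := (land_split (c+d+a) c d a rfl hcd).1 h1'
  obtain ⟨h5, h6⟩ := (land_split (c+d+b) c d b rfl hcd).1 h2'
  exact ⟨by rw [Nat.land_comm]; exact h3, by rw [Nat.land_comm]; exact h4,
    by rw [Nat.land_comm]; exact h5, by rw [Nat.land_comm]; exact h6⟩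

lemma comb_children {a b c d : ℕ} (hab : a &&& b = 0) (hcd : c &&& d = 0)
    (h1 : a &&& c = 0) (h2 : a &&& d = 0) (h3 : b &&& c = 0) (h4 : b &&& d = 0) :
    (a+b) &&& (c+d) = 0 := by
  have hca : c &&& a = 0 := by rw [Nat.land_comm]; exact h1
  have hcb : c &&& b = 0 := by rw [Nat.land_comm]; exact h3
  have hda : d &&& a = 0 := by rw [Nat.land_comm]; exact h2
  have hdb : d &&& b = 0 := by rw [Nat.land_comm]; exact h4
  have h5 : (c+d) &&& a = 0 := (land_split (c+d+a) c d a rfl hcd).2 ⟨hca, hda⟩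
  have h6 : (c+d) &&& b = 0 := (land_split (c+d+b) c d b rfl hcd).2 ⟨hcb, hdb⟩
  exact (land_split (a+b+(c+d)) a b (c+d) rfl hab).2
    ⟨by rw [Nat.land_comm]; exact h5, by rw [Nat.land_comm]; exact h6⟩

lemma fwd : ∀ (k : ℕ) (l : OldPartition) (g : ℕ → OldPartition), l.IsOdd → IsQuotRow k l g →
    ((∀ i < 2^k, (g i).IsOdd)
      ∧ (∀ i < 2^k, ∀ j < 2^k, i ≠ j → (g i).size &&& (g j).size = 0)
      ∧ (∑ i ∈ range (2^k), (g i).size) = l.size / 2^k) := by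
  intro k
  induction k with
  | zero =>
    intro l g hodd hrow
    rw [IsQuotRow] at hrow
    subst hrow
    refine ⟨fun i hi => by
        have h0 : i = 0 := Nat.lt_one_iff.1 (by simpa using hi)
        rw [h0]; exact hodd,
      fun i hi j hj hij => by
        exfalso
        have h1 : i = 0 := Nat.lt_one_iff.1 (by simpa using hi)
        have h2 : j = 0 := Nat.lt_one_iff.1 (by simpa using hj)
        exact hij (h1.trans h2.symm), ?_⟩
    rw [pow_zero]
    simp
  | succ k ih =>
    intro l g hodd hrow
    obtain ⟨g', hg', hq⟩ := hrow
    obtain ⟨hodd', hdisj', hsum'⟩ := ih l g' hodd hg'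
    -- per-parent facts
    have hfacts : ∀ i < 2^k, (g (2*i)).size + (g (2*i+1)).size = qsum (g' i)
        ∧ (g' i).size ≤ 2*((g (2*i)).size + (g (2*i+1)).size) + 1
        ∧ 2*((g (2*i)).size + (g (2*i+1)).size) ≤ (g' i).size
        ∧ (g (2*i)).IsOdd ∧ (g (2*i+1)).IsOdd
        ∧ (g (2*i)).size &&& (g (2*i+1)).size = 0 := by
      intro i hi
      have hqa := keyP_a (hq i hi)
      have hkb := (keyP_b (hq i hi)).1 (hodd' i hi)
      obtain ⟨c, hc⟩ := core_exists (g' i)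
      have hcs := core_size hc
      exact ⟨hqa, hkb.1, by omega, hkb.2.1, hkb.2.2.1, hkb.2.2.2⟩
    -- oddness of children
    have hoddc : ∀ i < 2^(k+1), (g i).IsOdd := by
      intro i hi
      have hi2 : i / 2 < 2^k := by
        have : (2:ℕ)^(k+1) = 2 * 2^k := by rw [pow_succ]; ring
        omega
      obtain ⟨-, -, -, h1, h2, -⟩ := hfacts (i/2) hi2
      rcases (by omega : i = 2*(i/2) ∨ i = 2*(i/2)+1) with h | h
      · rw [h]; exact h1
      · rw [h]; exact h2
    -- halves
    have hhalf : ∀ i < 2^k, (g (2*i)).size + (g (2*i+1)).size = (g' i).size / 2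
        ∧ (g' i).size % 2 = (g' i).size - 2*((g (2*i)).size + (g (2*i+1)).size) := by
      intro i hi
      obtain ⟨-, h1, h2, -, -, -⟩ := hfacts i hi
      omega
    -- disjointness
    have hdisjc : ∀ i < 2^(k+1), ∀ j < 2^(k+1), i ≠ j → (g i).size &&& (g j).size = 0 := by
      intro i hi j hj hij
      have hpow : (2:ℕ)^(k+1) = 2 * 2^k := by rw [pow_succ]; ring
      have hi2 : i / 2 < 2^k := by omega
      have hj2 : j / 2 < 2^k := by omega
      by_cases hpq : i / 2 = j / 2
      · -- siblings
        obtain ⟨-, -, -, -, -, hl⟩ := hfacts (i/2) hi2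
        rcases (by omega : (i = 2*(i/2) ∧ j = 2*(i/2)+1) ∨ (i = 2*(i/2)+1 ∧ j = 2*(i/2))) with
          ⟨h1, h2⟩ | ⟨h1, h2⟩
        · rw [h1, h2]; exact hl
        · rw [h1, h2, Nat.land_comm]; exact hl
      · -- cousins
        have hpdisj := hdisj' (i/2) hi2 (j/2) hj2 hpq
        have h1 := (land_rec _ _).1 hpdisj |>.2
        obtain ⟨hhi, -⟩ := hhalf (i/2) hi2
        obtain ⟨hhj, -⟩ := hhalf (j/2) hj2
        rw [← hhi, ← hhj] at h1
        obtain ⟨-, -, -, -, -, habi⟩ := hfacts (i/2) hi2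
        obtain ⟨-, -, -, -, -, habj⟩ := hfacts (j/2) hj2
        obtain ⟨d1, d2, d3, d4⟩ := disj_children habi habj h1
        rcases (by omega : i = 2*(i/2) ∨ i = 2*(i/2)+1) with hieq | hieq <;>
          rcases (by omega : j = 2*(j/2) ∨ j = 2*(j/2)+1) with hjeq | hjeq <;>
          [rw [hieq, hjeq]; rw [hieq, hjeq]; rw [hieq, hjeq]; rw [hieq, hjeq]] <;>
          assumption
    refine ⟨hoddc, hdisjc, ?_⟩
    -- sum
    have hpow : (2:ℕ)^(k+1) = 2 * 2^k := by rw [pow_succ]; ring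
    rw [hpow, sum_range_double (fun i => (g i).size) (2^k)]
    have hsc : ∀ i ∈ range (2^k), (g (2*i)).size + (g (2*i+1)).size = (g' i).size / 2 :=
      fun i hi => (hhalf i (mem_range.1 hi)).1
    rw [Finset.sum_congr rfl hsc]
    -- at most one parent odd
    have hmod : (∑ i ∈ range (2^k), (g' i).size % 2) ≤ 1 := by
      refine sum_mod_le_one (2^k) (fun i => (g' i).size) (fun i hi j hj hij => ?_)
      have := hdisj' i hi j hj hij
      have h1 := (land_rec _ _).1 this |>.1
      tauto
    have hsplit : ∑ i ∈ range (2^k), (g' i).size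
        = 2 * (∑ i ∈ range (2^k), (g' i).size / 2) + (∑ i ∈ range (2^k), (g' i).size % 2) := by
      rw [Finset.mul_sum, ← Finset.sum_add_distrib]
      exact Finset.sum_congr rfl (fun i _ => by omega)
    rw [hsum'] at hsplit
    have hdd : l.size / (2 * 2^k) = (l.size / 2^k) / 2 := by
      rw [Nat.div_div_eq_div_mul, mul_comm]
    omega

lemma cond_i {l : OldPartition} (hodd : l.IsOdd) (j : ℕ) (g : ℕ → OldPartition)
    (hg : IsQuotRow j l g) (c : ℕ → OldPartition) (hc : ∀ i < 2^j, IsECore 2 (g i) (c i)) :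
    (∑ i ∈ range (2^j), (c i).size) ≤ 1 := by
  obtain ⟨hoddr, hdisjr, -⟩ := fwd j l g hodd hg
  have hci : ∀ i ∈ range (2^j), (c i).size = (g i).size % 2 := by
    intro i hi
    have hi' := mem_range.1 hi
    obtain ⟨q0, q1, hq⟩ := quot_exists (g i)
    have hqa := keyP_a hq
    have hkb := (keyP_b hq).1 (hoddr i hi')
    have hcs := core_size (hc i hi')
    omega
  rw [Finset.sum_congr rfl hci]
  refine sum_mod_le_one (2^j) (fun i => (g i).size) (fun i hi j' hj' hij => ?_)
  have := hdisjr i hi j' hj' hij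
  have h1 := (land_rec _ _).1 this |>.1
  tauto

lemma bwd : ∀ (k : ℕ) (l : OldPartition) (f : ℕ → OldPartition), IsQuotRow k l f →
    (∀ j < k, ∀ g : ℕ → OldPartition, IsQuotRow j l g → ∀ c : ℕ → OldPartition,
      (∀ i < 2 ^ j, IsECore 2 (g i) (c i)) →
      (∑ i ∈ Finset.range (2 ^ j), (c i).size) ≤ 1) →
    (∀ i < 2^k, (f i).IsOdd) →
    (∀ i < 2^k, ∀ j < 2^k, i ≠ j → (f i).size &&& (f j).size = 0) →
    l.IsOdd := by
  intro k
  induction k with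
  | zero =>
    intro l f hrow _ hodd _
    rw [IsQuotRow] at hrow
    rw [← hrow]
    exact hodd 0 (by omega)
  | succ k ih =>
    intro l f hrow hcond hodd hdisj
    obtain ⟨g, hg, hq⟩ := hrow
    have hpow : (2:ℕ)^(k+1) = 2 * 2^k := by rw [pow_succ]; ring
    -- cores of row k
    set c : ℕ → OldPartition := fun i => (core_exists (g i)).choose with hcdef
    have hcore : ∀ i, IsECore 2 (g i) (c i) := fun i => (core_exists (g i)).choose_spec
    have hcores := hcond k (by omega) g hg c (fun i _ => hcore i)
    have hcle : ∀ i < 2^k, (c i).size ≤ 1 := by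
      intro i hi
      have h1 : (c i).size ≤ ∑ i' ∈ range (2^k), (c i').size := by
        refine Finset.single_le_sum (f := fun i' => (c i').size) (fun i' _ => Nat.zero_le _)
          (mem_range.2 hi)
      omega
    -- per-parent facts
    have hfacts : ∀ i < 2^k, (g i).IsOdd
        ∧ (g i).size % 2 = (c i).size
        ∧ (f (2*i)).size + (f (2*i+1)).size = (g i).size / 2 := by
      intro i hi
      have hqa := keyP_a (hq i hi)
      have hcs := core_size (hcore i)
      have hle := hcle i hi
      have hkb := (keyP_b (hq i hi)).2 ⟨by omega, hodd (2*i) (by omega), hodd (2*i+1) (by omega),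
        hdisj (2*i) (by omega) (2*i+1) (by omega) (by omega)⟩
      exact ⟨hkb, by omega, by omega⟩
    -- at most one core nonzero, i.e. at most one parent odd
    have hone : ∀ i < 2^k, ∀ j < 2^k, i ≠ j →
        ¬((g i).size % 2 = 1 ∧ (g j).size % 2 = 1) := by
      intro i hi j hj hij ⟨h1, h2⟩
      obtain ⟨-, hci, -⟩ := hfacts i hi
      obtain ⟨-, hcj, -⟩ := hfacts j hj
      have hsi : (c i).size = 1 := by omega
      have hsj : (c j).size = 1 := by omega
      -- sum over range would be ≥ 2
      have h2s : 2 ≤ ∑ i' ∈ range (2^k), (c i').size := by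
        have hsub : {i, j} ⊆ range (2^k) := by
          intro x hx
          rcases Finset.mem_insert.1 hx with rfl | hx
          · exact mem_range.2 hi
          · rw [Finset.mem_singleton.1 hx]; exact mem_range.2 hj
        have hss := Finset.sum_le_sum_of_subset (f := fun i' => (c i').size) hsub
        rw [Finset.sum_insert (by simp [hij]), Finset.sum_singleton, hsi, hsj] at hss
        exact le_trans (by omega) hss
      omega
    -- disjointness of row k
    have hdisjk : ∀ i < 2^k, ∀ j < 2^k, i ≠ j → (g i).size &&& (g j).size = 0 := by
      intro i hi j hj hij
      obtain ⟨-, hci, hhi⟩ := hfacts i hi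
      obtain ⟨-, hcj, hhj⟩ := hfacts j hj
      rw [land_rec]
      refine ⟨hone i hi j hj hij, ?_⟩
      rw [← hhi, ← hhj]
      exact comb_children
        (hdisj (2*i) (by omega) (2*i+1) (by omega) (by omega))
        (hdisj (2*j) (by omega) (2*j+1) (by omega) (by omega))
        (hdisj (2*i) (by omega) (2*j) (by omega) (by omega))
        (hdisj (2*i) (by omega) (2*j+1) (by omega) (by omega))
        (hdisj (2*i+1) (by omega) (2*j) (by omega) (by omega))
        (hdisj (2*i+1) (by omega) (2*j+1) (by omega) (by omega))
    exact ih l g hg (fun j hj => hcond j (by omega)) (fun i hi => (hfacts i hi).1) hdisjk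

end MacAux

open OldPartition

theorem stmt_9 (n k : ℕ) (l : OldPartition) (hl : l.size = n)
    (f : ℕ → OldPartition) (hf : IsQuotRow k l f) :
    (l.IsOdd ↔
      ((∀ j < k, ∀ g : ℕ → OldPartition, IsQuotRow j l g → ∀ c : ℕ → OldPartition,
          (∀ i < 2 ^ j, IsECore 2 (g i) (c i)) →
          (∑ i ∈ Finset.range (2 ^ j), (c i).size) ≤ 1) ∧
       (∀ i < 2 ^ k, (f i).IsOdd) ∧
       (∀ i < 2 ^ k, ∀ j < 2 ^ k, i ≠ j → (f i).size &&& (f j).size = 0))) ∧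
    (l.IsOdd → (∑ i ∈ Finset.range (2 ^ k), (f i).size) = n / 2 ^ k) := by
  constructor
  · constructor
    · intro hodd
      obtain ⟨h1, h2, h3⟩ := MacAux.fwd k l f hodd hf
      exact ⟨fun j _ g hg c hc => MacAux.cond_i hodd j g hg c hc, h1, h2⟩
    · rintro ⟨hcond, hodd, hdisj⟩
      exact MacAux.bwd k l f hf hcond hodd hdisj
  · intro hodd
    obtain ⟨-, -, h3⟩ := MacAux.fwd k l f hodd hf
    rw [← hl]
    exact h3
end

section
/- Let n = 2^t + m with 0 < m < 2^t, t ≥ 3, and 2^ℓ < m with ℓ > 0. Set a = 2^t − m and λ = (m, m, 1^a), a partition of n. Then λ is odd, f_0(λ) = (m, m, 1^{a−1}), f_ℓ(f_0(λ)) = (m, m − 2^ℓ, 1^{a−1}), f_ℓ(λ) = (m−1, m − 2^ℓ + 1, 1^a), and f_0(f_ℓ(λ)) = (m−1, m − 2^ℓ, 1^a); in particular f_0 f_ℓ (λ) ≠ f_ℓ f_0(λ). -/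
/-- A partition, given by its weakly decreasing sequence of parts (eventually zero). -/
structure SeqPartition where
  parts : ℕ → ℕ
  antitone : Antitone parts
  finite : ∃ N, parts N = 0

namespace SeqPartition

/-- The size `|λ|` of a partition: the sum of its parts. -/
noncomputable def size (l : SeqPartition) : ℕ := ∑ᶠ i, l.parts i

/-- The parts of the conjugate partition. -/
noncomputable def conjParts (l : SeqPartition) (j : ℕ) : ℕ := Nat.card {i : ℕ | j < l.parts i}

/-- The hook length of the cell `(i,j)` (0-indexed) of a partition. -/
noncomputable def hookLength (l : SeqPartition) (i j : ℕ) : ℕ :=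
  (l.parts i - j) + (l.conjParts j - i) - 1

/-- The degree of the irreducible character of the symmetric group labelled by `l`,
via the hook length formula. -/
noncomputable def degree (l : SeqPartition) : ℕ :=
  (l.size).factorial / ∏ᶠ (p : ℕ × ℕ) (_ : p.2 < l.parts p.1), l.hookLength p.1 p.2

/-- A partition is odd if the corresponding irreducible character of the symmetric
group has odd degree. -/
noncomputable def IsOdd (l : SeqPartition) : Prop := Odd l.degree

/-- A hook partition: all parts beyond the first are at most 1. -/
def IsHook (l : SeqPartition) : Prop := ∀ i, 1 ≤ i → l.parts i ≤ 1

/-- The beta-set (set of first-column hook lengths) of `l` computed with `N` beads. -/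
def betaSet (l : SeqPartition) (N : ℕ) : Finset ℕ :=
  (Finset.range N).image (fun i => l.parts i + (N - 1 - i))

/-- `RemoveHook l m h` : `m` is obtained from `l` by removing a hook of length `h`,
expressed via beta-sets. -/
def RemoveHook (l m : SeqPartition) (h : ℕ) : Prop :=
  ∃ N, l.parts N = 0 ∧ m.parts N = 0 ∧
    ∃ x ∈ l.betaSet N, h ≤ x ∧ x - h ∉ l.betaSet N ∧
      m.betaSet N = insert (x - h) ((l.betaSet N).erase x)

/-- `IsECore e l c` : `c` is the `e`-core of `l`, i.e. it is obtained from `l` by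
successively removing `e`-hooks and has no `e`-hook. -/
def IsECore (e : ℕ) (l c : SeqPartition) : Prop :=
  Relation.ReflTransGen (fun a b => RemoveHook a b e) l c ∧ ∀ b, ¬ RemoveHook c b e

/-- `IsQuotient2 l l0 l1` : `(l0, l1)` is the 2-quotient of `l`, via the parity
splitting of a beta-set with an even number of beads. -/
def IsQuotient2 (l l0 l1 : SeqPartition) : Prop :=
  ∃ N, Even N ∧ l.parts N = 0 ∧
    l0.parts ((l.betaSet N).filter (fun x => x % 2 = 0)).card = 0 ∧
    l1.parts ((l.betaSet N).filter (fun x => x % 2 = 1)).card = 0 ∧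
    l0.betaSet ((l.betaSet N).filter (fun x => x % 2 = 0)).card
      = ((l.betaSet N).filter (fun x => x % 2 = 0)).image (fun x => x / 2) ∧
    l1.betaSet ((l.betaSet N).filter (fun x => x % 2 = 1)).card
      = ((l.betaSet N).filter (fun x => x % 2 = 1)).image (fun x => x / 2)

/-- `IsQuotRow k l f` : `f 0, …, f (2^k - 1)` is the `k`-th row of the 2-quotient
tower of `l`. -/
def IsQuotRow : ℕ → SeqPartition → (ℕ → SeqPartition) → Prop
  | 0, l, f => f 0 = l
  | k + 1, l, f => ∃ g : ℕ → SeqPartition, IsQuotRow k l g ∧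
      ∀ i < 2 ^ k, IsQuotient2 (g i) (f (2 * i)) (f (2 * i + 1))

/-- `DGood d l` : `|l| ≡ 2^d - 1 (mod 2^(d+1))` and the `2^d`-core of `l` is a hook
partition. -/
def DGood (d : ℕ) (l : SeqPartition) : Prop :=
  l.size % 2 ^ (d + 1) = 2 ^ d - 1 ∧
  ∃ c : SeqPartition, IsECore (2 ^ d) l c ∧ c.IsHook

end SeqPartition

open SeqPartition

/-- The partition `(x, y, 1^c)` as a sequence of parts. -/
def pparts (x y c : ℕ) : ℕ → ℕ :=
  fun i => if i = 0 then x else if i = 1 then y else if i < c + 2 then 1 else 0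

open Finset Nat

section aux

variable {x y c : ℕ}

lemma pparts_antitone (hy : 1 ≤ y) (hyx : y ≤ x) : Antitone (pparts x y c) := by
  apply antitone_nat_of_succ_le
  intro n
  simp only [pparts]
  split_ifs <;> try contradiction
  all_goals omega

lemma pparts_eventually_zero : pparts x y c (c + 2) = 0 := by
  simp only [pparts]
  split_ifs <;> try contradiction
  all_goals omega

/-- The standard partition with parts `(x, y, 1^c)`. -/
def mkP (x y c : ℕ) (hy : 1 ≤ y) (hyx : y ≤ x) : SeqPartition :=
  ⟨pparts x y c, pparts_antitone hy hyx, ⟨c + 2, pparts_eventually_zero⟩⟩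

variable {p : SeqPartition} (hp : p.parts = pparts x y c) (hy : 1 ≤ y) (hyx : y ≤ x)

include hp hy hyx

lemma size_pparts : p.size = x + y + c := by
  have hsupp : Function.support p.parts ⊆ ↑(range (c + 2)) := by
    intro i hi
    simp only [Function.mem_support, hp, pparts] at hi
    simp only [coe_range, Set.mem_Iio]
    by_contra hc
    simp only [not_lt] at hc
    split_ifs at hi <;> omega
  rw [SeqPartition.size, finsum_eq_sum_of_support_subset _ hsupp, hp]
  clear hsupp hp
  induction c with
  | zero => simp [Finset.sum_range_succ, pparts]
  | succ c ih =>
    rw [Finset.sum_range_succ]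
    have hc : ∀ i ∈ range (c + 2), pparts x y (c + 1) i = pparts x y c i := by
      intro i hi
      simp only [mem_range] at hi
      simp only [pparts]
      split_ifs <;> try contradiction
      all_goals omega
    have hl : pparts x y (c + 1) (c + 2) = 1 := by
      simp only [pparts]
      split_ifs <;> try contradiction
      all_goals omega
    rw [Finset.sum_congr rfl hc, ih, hl]
    omega

omit hp hy hyx in
lemma natcard_setof (P : ℕ → Prop) (k : ℕ) (h : ∀ i, P i ↔ i < k) :
    Nat.card {i : ℕ | P i} = k := by
  have he : {i : ℕ | P i} = ↑(Finset.range k) := by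
    ext i; simp [h]
  rw [he, Nat.card_coe_set_eq, Set.ncard_coe_finset, Finset.card_range]

lemma conj_pparts (j : ℕ) :
    p.conjParts j = if j = 0 then c + 2 else if j < y then 2 else if j < x then 1 else 0 := by
  rw [conjParts, hp]
  split_ifs with h1 h2 h3
  · apply natcard_setof
    intro i; simp only [pparts]; subst h1
    split_ifs <;> omega
  · apply natcard_setof
    intro i; simp only [pparts]
    split_ifs <;> omega
  · apply natcard_setof
    intro i; simp only [pparts]
    split_ifs <;> omega
  · apply natcard_setof
    intro i; simp only [pparts]
    split_ifs <;> omega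

lemma hook_pparts_row0 (j : ℕ) (hj : j < x) :
    p.hookLength 0 j = if j = 0 then x + c + 1 else if j < y then x + 1 - j else x - j := by
  rw [hookLength, conj_pparts hp hy hyx, hp]
  simp only [pparts]
  split_ifs <;> try contradiction
  all_goals omega

lemma hook_pparts_row1 (j : ℕ) (hj : j < y) :
    p.hookLength 1 j = if j = 0 then y + c else y - j := by
  rw [hookLength, conj_pparts hp hy hyx, hp]
  simp only [pparts]
  split_ifs <;> try contradiction
  all_goals omega

lemma hook_pparts_leg (i : ℕ) (h2 : 2 ≤ i) (hi : i < c + 2) :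
    p.hookLength i 0 = c + 2 - i := by
  rw [hookLength, conj_pparts hp hy hyx, hp]
  simp only [pparts]
  split_ifs <;> try contradiction
  all_goals omega


omit hp hy hyx in
lemma prod_range_sub_eq_factorial (n : ℕ) : (∏ i ∈ range n, (n - i)) = n ! := by
  rw [← Nat.descFactorial_eq_prod_range, Nat.descFactorial_self]

/-- the cells of the Young diagram of `(x,y,1^c)` -/
def cellsOf (x y c : ℕ) : Finset (ℕ × ℕ) :=
  {0} ×ˢ range x ∪ {1} ×ˢ range y ∪ Ico 2 (c + 2) ×ˢ range 1

lemma mem_cellsOf (q : ℕ × ℕ) : q.2 < p.parts q.1 ↔ q ∈ cellsOf x y c := by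
  rw [hp]
  simp only [cellsOf, mem_union, mem_product, mem_singleton, mem_range, mem_Ico, pparts]
  split_ifs <;> omega

lemma hookprod_pparts :
    (∏ᶠ (q : ℕ × ℕ) (_ : q.2 < p.parts q.1), p.hookLength q.1 q.2) * (x - y + 1)
      = (x + c + 1) * (y + c) * x ! * (y - 1)! * c ! := by
  rw [finprod_cond_eq_prod_of_cond_iff _ (fun {q} _ => mem_cellsOf hp hy hyx q)]
  have hd1 : Disjoint (({0} : Finset ℕ) ×ˢ range x) ({1} ×ˢ range y) := by
    simp only [Finset.disjoint_left, mem_product, mem_singleton]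
    rintro ⟨i, j⟩ ⟨h1, _⟩ ⟨h2, _⟩
    simp_all
  have hd2 : Disjoint (({0} : Finset ℕ) ×ˢ range x ∪ {1} ×ˢ range y) (Ico 2 (c + 2) ×ˢ range 1) := by
    simp only [Finset.disjoint_left, mem_union, mem_product, mem_singleton, mem_Ico]
    rintro ⟨i, j⟩ h1 ⟨h2, _⟩
    rcases h1 with ⟨h1, _⟩ | ⟨h1, _⟩ <;> omega
  rw [cellsOf, Finset.prod_union hd2, Finset.prod_union hd1]
  rw [Finset.prod_product, Finset.prod_product, Finset.prod_product]
  rw [Finset.prod_singleton, Finset.prod_singleton]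
  -- row 0
  have hrow0 : (∏ j ∈ range x, p.hookLength 0 j) * (x - y + 1)
      = (x + c + 1) * x ! := by
    have hx1 : 1 ≤ x := le_trans hy hyx
    rw [Finset.prod_congr rfl (fun j hj => hook_pparts_row0 hp hy hyx j (mem_range.mp hj))]
    rw [show range x = Ico 0 x by rw [Nat.Ico_zero_eq_range],
      ← Finset.prod_Ico_consecutive _ (Nat.zero_le 1) hx1]
    rw [← Finset.prod_Ico_consecutive (M := ℕ) (fun j => if j = 0 then x + c + 1 else if j < y then x + 1 - j else x - j) (show (1:ℕ) ≤ y from hy) hyx]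
    have e0 : ∏ j ∈ Ico 0 1, (if j = 0 then x + c + 1 else if j < y then x + 1 - j else x - j) = x + c + 1 := by
      simp
    have e1 : ∏ j ∈ Ico 1 y, (if j = 0 then x + c + 1 else if j < y then x + 1 - j else x - j)
        = x.descFactorial (y - 1) := by
      rw [Finset.prod_Ico_eq_prod_range]
      rw [Nat.descFactorial_eq_prod_range]
      apply Finset.prod_congr rfl
      intro i hi
      simp only [mem_range] at hi
      split_ifs <;> omega
    have e2 : ∏ j ∈ Ico y x, (if j = 0 then x + c + 1 else if j < y then x + 1 - j else x - j)
        = (x - y)! := by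
      rw [Finset.prod_Ico_eq_prod_range]
      rw [← prod_range_sub_eq_factorial (x - y)]
      apply Finset.prod_congr rfl
      intro i hi
      simp only [mem_range] at hi
      split_ifs <;> omega
    rw [e0, e1, e2]
    have hdf : (x - (y - 1))! * x.descFactorial (y - 1) = x ! :=
      Nat.factorial_mul_descFactorial (by omega)
    have hxy : x - (y - 1) = (x - y) + 1 := by omega
    rw [hxy, Nat.factorial_succ] at hdf
    calc (x + c + 1) * (x.descFactorial (y - 1) * (x - y)!) * (x - y + 1)
        = (x + c + 1) * ((x - y + 1) * (x - y)! * x.descFactorial (y - 1)) := by ring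
      _ = (x + c + 1) * x ! := by rw [hdf]
  -- row 1
  have hrow1 : ∏ j ∈ range y, p.hookLength 1 j = (y + c) * (y - 1)! := by
    rw [Finset.prod_congr rfl (fun j hj => hook_pparts_row1 hp hy hyx j (mem_range.mp hj))]
    rw [show range y = Ico 0 y by rw [Nat.Ico_zero_eq_range],
      ← Finset.prod_Ico_consecutive _ (Nat.zero_le 1) hy]
    have e0 : ∏ j ∈ Ico 0 1, (if j = 0 then y + c else y - j) = y + c := by simp
    have e1 : ∏ j ∈ Ico 1 y, (if j = 0 then y + c else y - j) = (y - 1)! := by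
      rw [Finset.prod_Ico_eq_prod_range]
      rw [← prod_range_sub_eq_factorial (y - 1)]
      apply Finset.prod_congr rfl
      intro i hi
      simp only [mem_range] at hi
      split_ifs <;> omega
    rw [e0, e1]
  -- leg
  have hleg : ∏ i ∈ Ico 2 (c + 2), (∏ j ∈ range 1, p.hookLength i j) = c ! := by
    have : ∀ i ∈ Ico 2 (c + 2), (∏ j ∈ range 1, p.hookLength i j) = c + 2 - i := by
      intro i hi
      simp only [mem_Ico] at hi
      rw [Finset.prod_range_one]
      exact hook_pparts_leg hp hy hyx i hi.1 hi.2
    rw [Finset.prod_congr rfl this, Finset.prod_Ico_eq_prod_range]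
    rw [← prod_range_sub_eq_factorial c]
    apply Finset.prod_congr rfl
    intro i hi
    simp only [mem_range] at hi
    omega
  rw [hrow1, hleg]
  calc (∏ j ∈ range x, p.hookLength 0 j) * ((y + c) * (y - 1)!) * c ! * (x - y + 1)
      = ((∏ j ∈ range x, p.hookLength 0 j) * (x - y + 1)) * ((y + c) * (y - 1)!) * c ! := by ring
    _ = (x + c + 1) * (y + c) * x ! * (y - 1)! * c ! := by rw [hrow0]; ring


lemma degree_pparts :
    p.degree = (x + y + c).choose (y - 1) * (x + c).choose (c + 1)
        - (x + y + c).choose x * (y + c - 1).choose (c + 1)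
      ∧ (x + y + c).choose x * (y + c - 1).choose (c + 1)
        ≤ (x + y + c).choose (y - 1) * (x + c).choose (c + 1) := by
  set n := x + y + c with hn
  set T1 := n.choose (y - 1) * (x + c).choose (c + 1) with hT1
  set T2 := n.choose x * (y + c - 1).choose (c + 1) with hT2
  set Q := (x + c + 1) * (y + c) * x ! * (y - 1)! * c ! with hQ
  set P := (∏ᶠ (q : ℕ × ℕ) (_ : q.2 < p.parts q.1), p.hookLength q.1 q.2) with hP
  have hx : 1 ≤ x := le_trans hy hyx
  have hPQ : P * (x - y + 1) = Q := hookprod_pparts hp hy hyx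
  have e4 : x ! = x * (x - 1)! := by
    conv_lhs => rw [show x = (x - 1) + 1 by omega]
    rw [Nat.factorial_succ]
    congr 2
    omega
  have e5 : (c + 1)! = (c + 1) * c ! := Nat.factorial_succ _
  have hA : (c + 1) * Q * T1 = n ! * (x * (y + c)) := by
    have e1 : n.choose (y - 1) * (y - 1)! * (x + c + 1)! = n ! := by
      have h := Nat.choose_mul_factorial_mul_factorial (show y - 1 ≤ n by omega)
      rwa [show n - (y - 1) = x + c + 1 by omega] at h
    have e2 : (x + c).choose (c + 1) * (c + 1)! * (x - 1)! = (x + c)! := by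
      have h := Nat.choose_mul_factorial_mul_factorial (show c + 1 ≤ x + c by omega)
      rwa [show x + c - (c + 1) = x - 1 by omega] at h
    have e3 : (x + c + 1)! = (x + c + 1) * (x + c)! := Nat.factorial_succ _
    rw [hQ, hT1, ← e1, e3, ← e2, e4, e5]
    ring
  have hB : (c + 1) * Q * T2 = n ! * ((x + c + 1) * (y - 1)) := by
    rcases Nat.lt_or_ge y 2 with h2 | h2
    · have hy1 : y = 1 := by omega
      have : T2 = 0 := by
        rw [hT2, hy1]
        rw [show 1 + c - 1 = c by omega, Nat.choose_eq_zero_of_lt (show c < c + 1 by omega)]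
        ring
      rw [this, hy1]
      simp
    · have e1 : n.choose x * x ! * (y + c)! = n ! := by
        have h := Nat.choose_mul_factorial_mul_factorial (show x ≤ n by omega)
        rwa [show n - x = y + c by omega] at h
      have e2 : (y + c - 1).choose (c + 1) * (c + 1)! * (y - 2)! = (y + c - 1)! := by
        have h := Nat.choose_mul_factorial_mul_factorial (show c + 1 ≤ y + c - 1 by omega)
        rwa [show y + c - 1 - (c + 1) = y - 2 by omega] at h
      have e3 : (y + c)! = (y + c) * (y + c - 1)! := by
        have hyc : y + c = (y + c - 1) + 1 := by omega
        rw [hyc, Nat.factorial_succ]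
        congr 2
      have e6 : (y - 1)! = (y - 1) * (y - 2)! := by
        conv_lhs => rw [show y - 1 = (y - 2) + 1 by omega]
        rw [Nat.factorial_succ]
        congr 2
        omega
      rw [hQ, hT2, ← e1, e3, ← e2, e5, e6]
      ring
  have hQpos : 0 < Q := by
    rw [hQ]
    positivity
  have hT21 : T2 ≤ T1 := by
    have hle : (x + c + 1) * (y - 1) ≤ x * (y + c) := by
      calc (x + c + 1) * (y - 1) = x * (y - 1) + (c + 1) * (y - 1) := by ring
        _ ≤ x * (y - 1) + (c + 1) * x :=
            Nat.add_le_add_left (Nat.mul_le_mul_left _ (by omega)) _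
        _ = x * ((y - 1) + (c + 1)) := by ring
        _ = x * (y + c) := by
            congr 1
            omega
    have := hB.trans_le (Nat.mul_le_mul_left _ hle)
    rw [← hA] at this
    exact Nat.le_of_mul_le_mul_left this (by positivity)
  have key : x * (y + c) = (x + c + 1) * (y - 1) + (c + 1) * (x - y + 1) := by
    have h := (fun a d e : ℕ => show (a + d) * (a + 1 + e) = (a + d + e + 1) * a + (e + 1) * d
      from by ring) (y - 1) (x - y + 1) c
    rw [show y - 1 + (x - y + 1) = x by omega, show y - 1 + 1 + c = y + c by omega] at h
    rwa [show x + c + 1 = x + c + 1 from rfl] at h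
  have hDiff : ((c + 1) * Q) * (T1 - T2) = n ! * ((c + 1) * (x - y + 1)) := by
    rw [Nat.mul_sub, hA, hB, key, Nat.mul_add, Nat.add_sub_cancel_left]
  have hPf : P * (T1 - T2) = n ! := by
    have h1 : (P * (T1 - T2)) * ((x - y + 1) * (c + 1)) = n ! * ((x - y + 1) * (c + 1)) := by
      calc (P * (T1 - T2)) * ((x - y + 1) * (c + 1))
          = ((c + 1) * (P * (x - y + 1))) * (T1 - T2) := by ring
        _ = ((c + 1) * Q) * (T1 - T2) := by rw [hPQ]
        _ = n ! * ((c + 1) * (x - y + 1)) := hDiff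
        _ = n ! * ((x - y + 1) * (c + 1)) := by ring
    exact Nat.eq_of_mul_eq_mul_right (by positivity) h1
  have hPpos : 0 < P := by
    rcases Nat.eq_zero_or_pos P with h | h
    · exfalso
      rw [h, zero_mul] at hPQ
      omega
    · exact h
  constructor
  · rw [degree, size_pparts hp hy hyx, ← hn, ← hP, ← hPf,
      Nat.mul_div_cancel_left _ hPpos]
  · exact hT21


lemma mem_betaSet_pparts {N : ℕ} (hN : c + 2 ≤ N) (v : ℕ) :
    v ∈ p.betaSet N ↔ ((v < N - 1 ∧ v ≠ N - 2 - c) ∨ v = y + N - 2 ∨ v = x + N - 1) := by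
  simp only [betaSet, Finset.mem_image, Finset.mem_range, hp]
  constructor
  · rintro ⟨i, hi, rfl⟩
    simp only [pparts]
    split_ifs <;> try contradiction
    all_goals omega
  · intro hv
    rcases hv with ⟨h1, h2⟩ | h1 | h1
    · rcases Nat.lt_or_ge v (N - 1 - c) with h3 | h3
      · refine ⟨N - 1 - v, by omega, ?_⟩
        simp only [pparts]
        split_ifs <;> try contradiction
        all_goals omega
      · refine ⟨N - v, by omega, ?_⟩
        simp only [pparts]
        split_ifs <;> try contradiction
        all_goals omega
    · refine ⟨1, by omega, ?_⟩
      simp only [pparts]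
      norm_num
      omega
    · refine ⟨0, by omega, ?_⟩
      simp only [pparts]
      norm_num
      omega

omit hp in
lemma pparts_zero_iff {N : ℕ} : pparts x y c N = 0 ↔ c + 2 ≤ N := by
  have hx : 1 ≤ x := le_trans hy hyx
  simp only [pparts]
  split_ifs <;> first
    | omega
    | (simp only [false_iff, Nat.zero_eq, eq_self_iff_true, true_iff]; omega)

end aux

section inj

lemma strictAnti_image_eq {f g : ℕ → ℕ} {N : ℕ}
    (hf : ∀ ⦃i j : ℕ⦄, i < j → j < N → f j < f i)
    (hg : ∀ ⦃i j : ℕ⦄, i < j → j < N → g j < g i)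
    (h : (range N).image f = (range N).image g) :
    ∀ i < N, f i = g i := by
  have key : ∀ (F : ℕ → ℕ), (∀ ⦃i j : ℕ⦄, i < j → j < N → F j < F i) → ∀ i < N,
      (((range N).image F).filter (fun v => F i < v)).card = i := by
    intro F hF i hi
    have he : (((range N).image F).filter (fun v => F i < v)) = (range i).image F := by
      ext v
      simp only [Finset.mem_filter, Finset.mem_image, Finset.mem_range]
      constructor
      · rintro ⟨⟨j, hj, rfl⟩, hlt⟩
        refine ⟨j, ?_, rfl⟩
        by_contra hc
        push_neg at hc
        rcases Nat.eq_or_lt_of_le hc with rfl | hc2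
        · omega
        · have := hF hc2 hj
          omega
      · rintro ⟨j, hj, rfl⟩
        exact ⟨⟨j, by omega, rfl⟩, hF hj hi⟩
    rw [he, Finset.card_image_of_injOn, Finset.card_range]
    intro a ha b hb hab
    simp only [coe_range, Set.mem_Iio] at ha hb
    by_contra hne
    rcases Nat.lt_or_ge a b with h1 | h1
    · have := hF h1 (by omega)
      omega
    · have := hF (show b < a by omega) (by omega)
      omega
  intro i hi
  by_contra hne
  have hfi : f i ∈ (range N).image g := by
    rw [← h]
    exact Finset.mem_image_of_mem f (Finset.mem_range.mpr hi)
  have hgi : g i ∈ (range N).image f := by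
    rw [h]
    exact Finset.mem_image_of_mem g (Finset.mem_range.mpr hi)
  have hc1 := key f hf i hi
  have hc2 := key g hg i hi
  rw [h] at hc1
  set S := (range N).image g with hS
  have claim : ∀ a b : ℕ, b ∈ S → a < b →
      (S.filter (fun v => b < v)).card + 1 ≤ (S.filter (fun v => a < v)).card := by
    intro a b hbS hab
    have hsub : insert b (S.filter (fun v => b < v)) ⊆ S.filter (fun v => a < v) := by
      intro v hv
      rcases Finset.mem_insert.mp hv with rfl | hv
      · exact Finset.mem_filter.mpr ⟨hbS, hab⟩
      · have := Finset.mem_filter.mp hv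
        exact Finset.mem_filter.mpr ⟨this.1, by omega⟩
    have hcard := Finset.card_le_card hsub
    rwa [Finset.card_insert_of_notMem (fun hmem => by
      have := (Finset.mem_filter.mp hmem).2
      omega)] at hcard
  rcases Nat.lt_or_ge (f i) (g i) with h1 | h1
  · have hgS : g i ∈ S := Finset.mem_image_of_mem g (Finset.mem_range.mpr hi)
    have := claim (f i) (g i) hgS h1
    omega
  · have := claim (g i) (f i) hfi (by omega)
    omega


lemma parts_eq_of_betaSet_eq {q r : SeqPartition} {N : ℕ} (hqN : q.parts N = 0)
    (hrN : r.parts N = 0) (h : q.betaSet N = r.betaSet N) : q.parts = r.parts := by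
  funext i
  rcases Nat.lt_or_ge i N with hi | hi
  · have hf : ∀ ⦃a b : ℕ⦄, a < b → b < N →
        q.parts b + (N - 1 - b) < q.parts a + (N - 1 - a) := by
      intro a b hab hbN
      have := q.antitone (le_of_lt hab)
      omega
    have hg : ∀ ⦃a b : ℕ⦄, a < b → b < N →
        r.parts b + (N - 1 - b) < r.parts a + (N - 1 - a) := by
      intro a b hab hbN
      have := r.antitone (le_of_lt hab)
      omega
    have := strictAnti_image_eq hf hg h i hi
    omega
  · have h1 : q.parts i ≤ q.parts N := q.antitone hi
    have h2 : r.parts i ≤ r.parts N := r.antitone hi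
    omega

end inj

section removal

variable {p q : SeqPartition} {x y c h : ℕ}

lemma removeHook_cases (hp : p.parts = pparts x y c) (hy : 1 ≤ y) (hyx : y ≤ x)
    (hh : 1 ≤ h) (hr : RemoveHook p q h) :
    (h ≤ c ∧ q.parts = pparts x y (c - h)) ∨
    (h = y + c) ∨
    (h < y ∧ q.parts = pparts x (y - h) c) ∨
    (h = x + c + 1) ∨
    (x - y + 2 ≤ h ∧ h ≤ x ∧ q.parts = pparts (y - 1) (x - h + 1) c) ∨
    (h ≤ x - y ∧ q.parts = pparts (x - h) y c) := by
  obtain ⟨N, hpN, hqN, x0, hx0B, hhx0, hnotB, hB'⟩ := hr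
  have hx : 1 ≤ x := le_trans hy hyx
  have hN : c + 2 ≤ N := by
    rw [hp, pparts_zero_iff hy hyx] at hpN
    exact hpN
  have bmem := mem_betaSet_pparts hp hy hyx hN
  have qmem : ∀ v, v ∈ q.betaSet N ↔ (v = x0 - h ∨ (v ≠ x0 ∧
      ((v < N - 1 ∧ v ≠ N - 2 - c) ∨ v = y + N - 2 ∨ v = x + N - 1))) := by
    intro v
    rw [hB', Finset.mem_insert, Finset.mem_erase, bmem v]
  rw [bmem x0] at hx0B
  rw [bmem (x0 - h)] at hnotB
  -- helper to conclude a shape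
  have conclude : ∀ x' y' c', 1 ≤ y' → y' ≤ x' → c' + 2 ≤ N →
      (∀ v, (v = x0 - h ∨ (v ≠ x0 ∧
        ((v < N - 1 ∧ v ≠ N - 2 - c) ∨ v = y + N - 2 ∨ v = x + N - 1))) ↔
        ((v < N - 1 ∧ v ≠ N - 2 - c') ∨ v = y' + N - 2 ∨ v = x' + N - 1)) →
      q.parts = pparts x' y' c' := by
    intro x' y' c' hy' hyx' hN' hiff
    have hrp : (mkP x' y' c' hy' hyx').parts = pparts x' y' c' := rfl
    have hrN : (mkP x' y' c' hy' hyx').parts N = 0 := by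
      rw [hrp, pparts_zero_iff hy' hyx']
      exact hN'
    have hbq : q.betaSet N = (mkP x' y' c' hy' hyx').betaSet N := by
      ext v
      rw [qmem v, mem_betaSet_pparts hrp hy' hyx' hN' v]
      exact hiff v
    rw [parts_eq_of_betaSet_eq hqN hrN hbq, hrp]
  rcases hx0B with ⟨hlt, hne⟩ | hB | hC
  · -- x0 in the erased-range region
    left
    have hw : x0 - h = N - 2 - c := by omega
    have hhc : h ≤ c := by omega
    refine ⟨hhc, conclude x y (c - h) hy hyx (by omega) ?_⟩
    intro v
    omega
  · -- x0 = y + N - 2 : second row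
    have hwlt : x0 - h < N - 1 ∨ N - 1 ≤ x0 - h := by omega
    rcases Nat.lt_or_ge (x0 - h) (N - 1) with hw | hw
    · -- removes whole arm of second row
      right; left
      omega
    · -- w ≥ N - 1, w ≠ x + N - 1 (since not in B), w < x0
      have hwx : x0 - h ≠ x + N - 1 := by omega
      have hhy : h < y := by omega
      right; right; left
      refine ⟨hhy, conclude x (y - h) c (by omega) (by omega) hN ?_⟩
      intro v
      omega
  · -- x0 = x + N - 1 : first row
    rcases Nat.lt_or_ge (x0 - h) (N - 1) with hw | hw
    · right; right; right; left
      omega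
    · have hwy : x0 - h ≠ y + N - 2 := by omega
      rcases Nat.lt_or_ge (x0 - h) (y + N - 2) with hw2 | hw2
      · -- new first row shorter than old second row
        right; right; right; right; left
        have hh1 : x - y + 2 ≤ h := by omega
        have hh2 : h ≤ x := by omega
        refine ⟨hh1, hh2, conclude (y - 1) (x - h + 1) c (by omega) (by omega) hN ?_⟩
        intro v
        omega
      · right; right; right; right; right
        have hh1 : h ≤ x - y := by omega
        refine ⟨hh1, conclude (x - h) y c hy (by omega) hN ?_⟩
        intro v
        omega

end removal

section parity

lemma even_choose_pow {t k : ℕ} (h0 : k ≠ 0) (h1 : k ≠ 2 ^ t) : Even ((2 ^ t).choose k) := by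
  rcases Nat.lt_or_ge (2 ^ t) k with hlt | hle
  · simp [Nat.choose_eq_zero_of_lt hlt]
  rw [even_iff_two_dvd]
  exact Nat.Prime.dvd_choose_pow Nat.prime_two h0 h1

lemma odd_choose_pow_sub_one {t k : ℕ} (h : k ≤ 2 ^ t - 1) : Odd ((2 ^ t - 1).choose k) := by
  have h2 : 0 < 2 ^ t := Nat.pow_pos (by norm_num)
  induction k with
  | zero => simp
  | succ k ih =>
    have hpas : (2 ^ t).choose (k + 1) = (2 ^ t - 1).choose k + (2 ^ t - 1).choose (k + 1) := by
      have h1 : 2 ^ t = (2 ^ t - 1) + 1 := by omega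
      rw [h1]
      exact Nat.choose_succ_succ _ _
    have he : Even ((2 ^ t).choose (k + 1)) := even_choose_pow (by omega) (by omega)
    have ho := ih (by omega)
    rw [Nat.even_iff] at he
    rw [Nat.odd_iff] at ho ⊢
    omega

lemma choose_pow_add_mod_two {t r k : ℕ} (hk : k < 2 ^ t) :
    (2 ^ t + r).choose k % 2 = r.choose k % 2 := by
  rw [Nat.add_choose_eq]
  have hmem : ((0 : ℕ), k) ∈ antidiagonal k := by simp
  rw [← Finset.add_sum_erase _ _ hmem]
  have h2 : 2 ∣ ∑ ij ∈ (antidiagonal k).erase (0, k),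
      (2 ^ t).choose ij.1 * r.choose ij.2 := by
    apply Finset.dvd_sum
    intro ij hij
    rw [Finset.mem_erase, Finset.HasAntidiagonal.mem_antidiagonal] at hij
    have h1 : ij.1 ≠ 0 := by
      intro h0
      apply hij.1
      have : ij.2 = k := by omega
      exact Prod.ext h0 this
    apply Dvd.dvd.mul_right
    exact Nat.Prime.dvd_choose_pow Nat.prime_two h1 (by omega)
  simp only [Nat.choose_zero_right, one_mul]
  omega

lemma even_choose_pow_add {t r k : ℕ} (hr : r < k) (hk : k < 2 ^ t) :
    Even ((2 ^ t + r).choose k) := by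
  rw [Nat.even_iff, choose_pow_add_mod_two hk, Nat.choose_eq_zero_of_lt hr]

lemma odd_choose_pow_add_self {t r : ℕ} (hr : r < 2 ^ t) :
    Odd ((2 ^ t + r).choose r) := by
  rw [Nat.odd_iff, choose_pow_add_mod_two hr, Nat.choose_self]

lemma not_isOdd_1 {p : SeqPartition} {x y c T r : ℕ} (hp : p.parts = pparts x y c)
    (hy : 1 ≤ y) (hyx : y ≤ x) (hn : x + y + c = 2 ^ T + r)
    (h1 : r < y - 1) (h2 : r < x) (hk1 : y - 1 < 2 ^ T) (hk2 : x < 2 ^ T) : ¬ p.IsOdd := by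
  obtain ⟨hdeg, hle⟩ := degree_pparts hp hy hyx
  intro hodd
  rw [IsOdd, hdeg] at hodd
  have e1 : Even ((x + y + c).choose (y - 1)) := by
    rw [hn]
    exact even_choose_pow_add h1 hk1
  have e2 : Even ((x + y + c).choose x) := by
    rw [hn]
    exact even_choose_pow_add h2 hk2
  have heven : Even ((x + y + c).choose (y - 1) * (x + c).choose (c + 1)
      - (x + y + c).choose x * (y + c - 1).choose (c + 1)) :=
    (Nat.even_sub hle).mpr (iff_of_true (e1.mul_right _) (e2.mul_right _))
  exact (Nat.not_odd_iff_even.mpr heven) hodd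

lemma not_isOdd_2 {p : SeqPartition} {x y c T r : ℕ} (hp : p.parts = pparts x y c)
    (hy : 1 ≤ y) (hyx : y ≤ x) (hn : x + y + c = 2 ^ T + r)
    (hxc : x + c = 2 ^ T) (hc1 : c + 1 < 2 ^ T) (h2 : r < x) (hk2 : x < 2 ^ T) :
    ¬ p.IsOdd := by
  obtain ⟨hdeg, hle⟩ := degree_pparts hp hy hyx
  intro hodd
  rw [IsOdd, hdeg] at hodd
  have e1 : Even ((x + c).choose (c + 1)) := by
    rw [hxc]
    exact even_choose_pow (by omega) (by omega)
  have e2 : Even ((x + y + c).choose x) := by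
    rw [hn]
    exact even_choose_pow_add h2 hk2
  have heven : Even ((x + y + c).choose (y - 1) * (x + c).choose (c + 1)
      - (x + y + c).choose x * (y + c - 1).choose (c + 1)) :=
    (Nat.even_sub hle).mpr (iff_of_true (e1.mul_left _) (e2.mul_right _))
  exact (Nat.not_odd_iff_even.mpr heven) hodd

lemma isOdd_A {p : SeqPartition} {x c T : ℕ} (hp : p.parts = pparts x x c)
    (hx : 1 ≤ x) (hxc : x + c = 2 ^ T) (hx2 : x < 2 ^ T) (hc1 : c + 1 < 2 ^ T) :
    p.IsOdd := by
  obtain ⟨hdeg, hle⟩ := degree_pparts hp hx (le_refl x)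
  rw [IsOdd, hdeg]
  have e1 : Even ((x + c).choose (c + 1)) := by
    rw [hxc]
    exact even_choose_pow (by omega) (by omega)
  have o1 : Odd ((x + x + c).choose x) := by
    rw [show x + x + c = 2 ^ T + x by omega]
    exact odd_choose_pow_add_self hx2
  have o2 : Odd ((x + c - 1).choose (c + 1)) := by
    rw [show x + c - 1 = 2 ^ T - 1 by omega]
    exact odd_choose_pow_sub_one (by omega)
  exact Nat.Even.sub_odd hle (e1.mul_left _) (o1.mul o2)

end parity



theorem stmt_18 (t m l : ℕ) (ht : 3 ≤ t) (hm0 : 0 < m) (hm : m < 2 ^ t)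
    (hl0 : 0 < l) (hl : 2 ^ l < m) (lam : SeqPartition)
    (hlam : lam.parts = pparts m m (2 ^ t - m)) :
    lam.IsOdd ∧
    (∀ mu : SeqPartition, mu.IsOdd → RemoveHook lam mu 1 →
      mu.parts = pparts m m (2 ^ t - m - 1)) ∧
    (∀ mu nu : SeqPartition, mu.IsOdd → RemoveHook lam mu 1 →
      nu.IsOdd → RemoveHook mu nu (2 ^ l) →
      nu.parts = pparts m (m - 2 ^ l) (2 ^ t - m - 1)) ∧
    (∀ mu : SeqPartition, mu.IsOdd → RemoveHook lam mu (2 ^ l) →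
      mu.parts = pparts (m - 1) (m - 2 ^ l + 1) (2 ^ t - m)) ∧
    (∀ mu nu : SeqPartition, mu.IsOdd → RemoveHook lam mu (2 ^ l) →
      nu.IsOdd → RemoveHook mu nu 1 →
      nu.parts = pparts (m - 1) (m - 2 ^ l) (2 ^ t - m)) ∧
    (∀ nu1 nu2 : SeqPartition, nu1.IsOdd → nu2.IsOdd →
      (∃ mu : SeqPartition, mu.IsOdd ∧ RemoveHook lam mu 1 ∧ RemoveHook mu nu1 (2 ^ l)) →
      (∃ mu : SeqPartition, mu.IsOdd ∧ RemoveHook lam mu (2 ^ l) ∧ RemoveHook mu nu2 1) →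
      nu1 ≠ nu2) := by
  have h2l : (2 : ℕ) ^ l = 2 * 2 ^ (l - 1) := by
    conv_lhs => rw [show l = (l - 1) + 1 by omega]
    rw [pow_succ]
    ring
  have h2t : (2 : ℕ) ^ t = 2 * 2 ^ (t - 1) := by
    conv_lhs => rw [show t = (t - 1) + 1 by omega]
    rw [pow_succ]
    ring
  have hp1 : 1 ≤ (2 : ℕ) ^ (l - 1) := Nat.one_le_two_pow
  have hq1 : 1 ≤ (2 : ℕ) ^ (t - 1) := Nat.one_le_two_pow
  have hs2 : 2 ≤ (2 : ℕ) ^ l := by omega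
  have hm3 : 3 ≤ m := by omega
  have ht8 : (8 : ℕ) ≤ 2 ^ t := by
    calc (8 : ℕ) = 2 ^ 3 := by norm_num
      _ ≤ 2 ^ t := Nat.pow_le_pow_right (by norm_num) ht
  -- f_0 of lambda
  have key0 : ∀ mu : SeqPartition, mu.IsOdd → RemoveHook lam mu 1 →
      mu.parts = pparts m m (2 ^ t - m - 1) := by
    intro mu hodd hrem
    rcases removeHook_cases hlam (by omega) (le_refl m) (by norm_num) hrem with
      ⟨hh, hres⟩ | hh | ⟨hh, hres⟩ | hh | ⟨hh1, hh2, hres⟩ | ⟨hh, hres⟩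
    · exact hres
    · omega
    · exact absurd hodd (not_isOdd_2 hres (by omega) (by omega)
        (show m + (m - 1) + (2 ^ t - m) = 2 ^ t + (m - 1) by omega)
        (by omega) (by omega) (by omega) (by omega))
    · omega
    · omega
    · omega
  -- f_l of lambda
  have keyl : ∀ mu : SeqPartition, mu.IsOdd → RemoveHook lam mu (2 ^ l) →
      mu.parts = pparts (m - 1) (m - 2 ^ l + 1) (2 ^ t - m) := by
    intro mu hodd hrem
    rcases removeHook_cases hlam (by omega) (le_refl m) (by omega) hrem with
      ⟨hh, hres⟩ | hh | ⟨hh, hres⟩ | hh | ⟨hh1, hh2, hres⟩ | ⟨hh, hres⟩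
    · exact absurd hodd (not_isOdd_1 hres (by omega) (le_refl m)
        (show m + m + (2 ^ t - m - 2 ^ l) = 2 ^ t + (m - 2 ^ l) by omega)
        (by omega) (by omega) (by omega) (by omega))
    · omega
    · exact absurd hodd (not_isOdd_2 hres (by omega) (by omega)
        (show m + (m - 2 ^ l) + (2 ^ t - m) = 2 ^ t + (m - 2 ^ l) by omega)
        (by omega) (by omega) (by omega) (by omega))
    · omega
    · exact hres
    · omega
  -- f_l after f_0
  have keyA : ∀ mu nu : SeqPartition, mu.IsOdd → RemoveHook lam mu 1 →
      nu.IsOdd → RemoveHook mu nu (2 ^ l) →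
      nu.parts = pparts m (m - 2 ^ l) (2 ^ t - m - 1) := by
    intro mu nu hmu hrmu hnu hrnu
    have hmup := key0 mu hmu hrmu
    rcases removeHook_cases hmup (by omega) (le_refl m) (by omega) hrnu with
      ⟨hh, hres⟩ | hh | ⟨hh, hres⟩ | hh | ⟨hh1, hh2, hres⟩ | ⟨hh, hres⟩
    · exact absurd hnu (not_isOdd_1 hres (by omega) (le_refl m)
        (show m + m + (2 ^ t - m - 1 - 2 ^ l) = 2 ^ t + (m - 1 - 2 ^ l) by omega)
        (by omega) (by omega) (by omega) (by omega))
    · omega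
    · exact hres
    · omega
    · exact absurd hnu (not_isOdd_1 hres (by omega) (by omega)
        (show (m - 1) + (m - 2 ^ l + 1) + (2 ^ t - m - 1) = 2 ^ t + (m - 2 ^ l - 1) by omega)
        (by omega) (by omega) (by omega) (by omega))
    · omega
  -- f_0 after f_l
  have keyB : ∀ mu nu : SeqPartition, mu.IsOdd → RemoveHook lam mu (2 ^ l) →
      nu.IsOdd → RemoveHook mu nu 1 →
      nu.parts = pparts (m - 1) (m - 2 ^ l) (2 ^ t - m) := by
    intro mu nu hmu hrmu hnu hrnu
    have hmup := keyl mu hmu hrmu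
    rcases removeHook_cases hmup (by omega) (by omega) (by norm_num) hrnu with
      ⟨hh, hres⟩ | hh | ⟨hh, hres⟩ | hh | ⟨hh1, hh2, hres⟩ | ⟨hh, hres⟩
    · exact absurd hnu (not_isOdd_1 hres (by omega) (by omega)
        (show (m - 1) + (m - 2 ^ l + 1) + (2 ^ t - m - 1) = 2 ^ t + (m - 2 ^ l - 1) by omega)
        (by omega) (by omega) (by omega) (by omega))
    · omega
    · rw [show m - 2 ^ l + 1 - 1 = m - 2 ^ l by omega] at hres
      exact hres
    · omega
    · omega
    · exact absurd hnu (not_isOdd_1 hres (by omega) (by omega)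
        (show (m - 1 - 1) + (m - 2 ^ l + 1) + (2 ^ t - m) = 2 ^ t + (m - 2 ^ l - 1) by omega)
        (by omega) (by omega) (by omega) (by omega))
  refine ⟨?_, key0, keyA, keyl, keyB, ?_⟩
  · exact isOdd_A (T := t) hlam (by omega)
      (show m + (2 ^ t - m) = 2 ^ t by omega) (by omega) (by omega)
  · intro nu1 nu2 hnu1 hnu2 ⟨mu1, hmu1, hrm1, hrn1⟩ ⟨mu2, hmu2, hrm2, hrn2⟩ heq
    have h1 := keyA mu1 nu1 hmu1 hrm1 hnu1 hrn1
    have h2 := keyB mu2 nu2 hmu2 hrm2 hnu2 hrn2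
    have h0 : pparts m (m - 2 ^ l) (2 ^ t - m - 1) 0
        = pparts (m - 1) (m - 2 ^ l) (2 ^ t - m) 0 := by
      rw [← h1, ← h2, heq]
    simp only [pparts] at h0
    norm_num at h0
    omega
end
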